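/- arXiv:1305.5032 — 8 statements merged into one kernel-verified Lean document; each statement's English description precedes it below -/
import Mathlib

section
/- For compositions I = (i_1,...,i_k) and J = (j_1,...,j_k) of the same integer n and length k, the number of set partitions π of {1,...,n} into k blocks such that, when the blocks are ordered by increasing maximal elements, the block sizes are (i_1,...,i_k) and the maximal elements are (j_1, j_1+j_2, ..., j_1+...+j_k), equals the product over s from 1 to k of binomial(j_1+...+j_s - (i_1+...+i_{s-1}) - 1, i_s - 1). -/
open Finset

/-- Condition: a finpartition with `M.length` blocks, where the `s`-th block (ordered
by increasing maxima) has maximum `M.getD s 0` and size `L.getD s 0`. -/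
def PartCond (S : Finset ℕ) (M L : List ℕ) (P : Finpartition S) : Prop :=
  P.parts.card = M.length ∧
  ∀ s < M.length, ∃ B ∈ P.parts,
    M.getD s 0 ∈ B ∧ (∀ x ∈ B, x ≤ M.getD s 0) ∧ B.card = L.getD s 0

lemma sup_erase_eq {S : Finset ℕ} (P : Finpartition S) {B : Finset ℕ} (hB : B ∈ P.parts) :
    (P.parts.erase B).sup id = S \ B := by
  ext x
  simp only [Finset.mem_sup, Finset.mem_erase, Finset.mem_sdiff, id]
  constructor
  · rintro ⟨C, ⟨hne, hC⟩, hx⟩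
    exact ⟨P.le hC hx, fun hxB => hne (P.eq_of_mem_parts hC hB hx hxB)⟩
  · rintro ⟨hxS, hxB⟩
    obtain ⟨C, hC, hx⟩ := P.exists_mem hxS
    exact ⟨C, ⟨fun h => hxB (h ▸ hx), hC⟩, hx⟩

def fiberEquiv {S B : Finset ℕ} {m l : ℕ} {M L : List ℕ}
    (hsort : ∀ m' ∈ M, m < m')
    (hBS : B ⊆ S) (hmB : m ∈ B) (hBle : ∀ x ∈ B, x ≤ m) (hBcard : B.card = l) :
    {P : Finpartition S // PartCond S (m :: M) (l :: L) P ∧ P.part m = B} ≃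
    {P' : Finpartition (S \ B) // PartCond (S \ B) M L P'} where
  toFun := fun ⟨P, hP, hpart⟩ => by
    have hBparts : B ∈ P.parts := hpart ▸ P.part_mem.2 (hBS hmB)
    refine ⟨P.ofSubset (Finset.erase_subset B P.parts) (sup_erase_eq P hBparts), ?_, ?_⟩
    · simp only [Finpartition.ofSubset, Finset.card_erase_of_mem hBparts, hP.1,
        List.length_cons, Nat.add_sub_cancel]
    · intro s hs
      obtain ⟨B', hB', h1, h2, h3⟩ := hP.2 (s + 1) (by simpa using Nat.succ_lt_succ hs)
      simp only [List.getD_cons_succ] at h1 h2 h3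
      have hmem : M.getD s 0 ∈ M := by
        rw [List.getD_eq_getElem M 0 hs]; exact List.getElem_mem hs
      have hne : B' ≠ B := by
        intro h
        exact absurd (hBle _ (h ▸ h1)) (not_le.2 (hsort _ hmem))
      exact ⟨B', Finset.mem_erase.2 ⟨hne, hB'⟩, h1, h2, h3⟩
  invFun := fun ⟨P', hP'⟩ => by
    have hne : B ≠ (⊥ : Finset ℕ) := by
      rw [Finset.bot_eq_empty, ← Finset.nonempty_iff_ne_empty]; exact ⟨m, hmB⟩
    have hsup : (S \ B) ⊔ B = S := by
      rw [Finset.sup_eq_union]; exact Finset.sdiff_union_of_subset hBS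
    refine ⟨P'.extend hne Finset.sdiff_disjoint hsup, ⟨?_, ?_⟩, ?_⟩
    · have hnotmem : B ∉ P'.parts := fun h =>
        (Finset.mem_sdiff.1 (P'.le h hmB)).2 hmB
      simp only [Finpartition.extend, Finset.card_insert_of_notMem hnotmem, hP'.1,
        List.length_cons]
    · intro s hs
      match s with
      | 0 =>
        exact ⟨B, Finset.mem_insert_self _ _, by simpa using hmB, by simpa using hBle,
          by simpa using hBcard⟩
      | s + 1 =>
        obtain ⟨B', hB', h1, h2, h3⟩ := hP'.2 s (by simpa using hs)
        exact ⟨B', Finset.mem_insert_of_mem hB', by simpa using h1, by simpa using h2,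
          by simpa using h3⟩
    · exact Finpartition.part_eq_of_mem _ (Finset.mem_insert_self _ _) hmB
  left_inv := fun ⟨P, hP, hpart⟩ => by
    have hBparts : B ∈ P.parts := hpart ▸ P.part_mem.2 (hBS hmB)
    apply Subtype.ext
    apply Finpartition.ext
    simp [Finpartition.extend, Finpartition.ofSubset, Finset.insert_erase hBparts]
  right_inv := fun ⟨P', hP'⟩ => by
    have hnotmem : B ∉ P'.parts := fun h =>
      (Finset.mem_sdiff.1 (P'.le h hmB)).2 hmB
    apply Subtype.ext
    apply Finpartition.ext
    simp [Finpartition.extend, Finpartition.ofSubset, Finset.erase_insert hnotmem]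

/-- The set of possible blocks with maximum `m` and size `l` inside `S`. -/
def validB (S : Finset ℕ) (m l : ℕ) : Finset (Finset ℕ) :=
  ((S.filter (· < m)).powersetCard (l - 1)).image (insert m)

lemma mem_validB {S : Finset ℕ} {m l : ℕ} (hm : m ∈ S) (hl : 0 < l) {B : Finset ℕ} :
    B ∈ validB S m l ↔ B ⊆ S ∧ m ∈ B ∧ (∀ x ∈ B, x ≤ m) ∧ B.card = l := by
  constructor
  · rintro hB
    obtain ⟨T, hT, rfl⟩ := Finset.mem_image.1 hB
    rw [Finset.mem_powersetCard] at hT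
    have hmT : m ∉ T := fun h => lt_irrefl m (Finset.mem_filter.1 (hT.1 h)).2
    refine ⟨?_, Finset.mem_insert_self _ _, ?_, ?_⟩
    · intro x hx
      rcases Finset.mem_insert.1 hx with rfl | hx
      · exact hm
      · exact (Finset.mem_filter.1 (hT.1 hx)).1
    · intro x hx
      rcases Finset.mem_insert.1 hx with rfl | hx
      · exact le_rfl
      · exact le_of_lt (Finset.mem_filter.1 (hT.1 hx)).2
    · rw [Finset.card_insert_of_notMem hmT, hT.2]
      omega
  · rintro ⟨hBS, hmB, hBle, hBcard⟩
    refine Finset.mem_image.2 ⟨B.erase m, ?_, Finset.insert_erase hmB⟩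
    rw [Finset.mem_powersetCard]
    refine ⟨?_, by rw [Finset.card_erase_of_mem hmB, hBcard]⟩
    intro x hx
    obtain ⟨hxm, hxB⟩ := Finset.mem_erase.1 hx
    exact Finset.mem_filter.2 ⟨hBS hxB, lt_of_le_of_ne (hBle x hxB) hxm⟩

lemma card_validB (S : Finset ℕ) (m l : ℕ) :
    (validB S m l).card = Nat.choose ((S.filter (· < m)).card) (l - 1) := by
  rw [validB, Finset.card_image_of_injOn, Finset.card_powersetCard]
  intro T hT T' hT' h
  rw [Finset.mem_coe, Finset.mem_powersetCard] at hT hT'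
  have hmT : m ∉ T := fun hc => lt_irrefl m (Finset.mem_filter.1 (hT.1 hc)).2
  have hmT' : m ∉ T' := fun hc => lt_irrefl m (Finset.mem_filter.1 (hT'.1 hc)).2
  rw [← Finset.erase_insert hmT, h, Finset.erase_insert hmT']

lemma key (M : List ℕ) : ∀ (L : List ℕ) (S : Finset ℕ),
    M.length = L.length → M.Pairwise (· < ·) →
    (∀ m' ∈ M, m' ∈ S) → (∀ x ∈ L, 0 < x) → L.sum = S.card →
    Nat.card {P : Finpartition S // PartCond S M L P} =
      ∏ s ∈ Finset.range M.length,
        Nat.choose ((S.filter (· < M.getD s 0)).card - (L.take s).sum) (L.getD s 0 - 1) := by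
  induction M with
  | nil =>
    intro L S hlen hsort hmem hpos hsum
    obtain rfl : L = [] := List.eq_nil_of_length_eq_zero hlen.symm
    obtain rfl : S = ∅ := Finset.card_eq_zero.1 hsum.symm
    have hcond : ∀ P : Finpartition (∅ : Finset ℕ), PartCond ∅ [] [] P := by
      intro P
      refine ⟨?_, by simp⟩
      have : P.parts = ∅ := Finpartition.parts_eq_empty_iff.2 rfl
      simp [this]
    haveI : Unique {P : Finpartition (∅ : Finset ℕ) // PartCond ∅ [] [] P} :=
      { default := ⟨⊥, hcond ⊥⟩
        uniq := fun P => Subtype.ext (Finpartition.ext (by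
          rw [Finpartition.parts_eq_empty_iff.2 rfl,
            Finpartition.parts_eq_empty_iff.2 rfl])) }
    simp [Nat.card_unique]
  | cons m M ih =>
    intro L S hlen hsort hmem hpos hsum
    match L with
    | l :: L =>
    classical
    rw [List.pairwise_cons] at hsort
    have hm : m ∈ S := hmem m (List.mem_cons_self)
    have hl : 0 < l := hpos l (List.mem_cons_self)
    have hlen' : M.length = L.length := by simpa using hlen
    -- the value of the inner products
    set V : ℕ := ∏ s ∈ Finset.range M.length,
        Nat.choose ((S.filter (· < M.getD s 0)).card - l - (L.take s).sum)
          (L.getD s 0 - 1) with hV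
    have hgetDmem : ∀ s < M.length, M.getD s 0 ∈ M := by
      intro s hs
      rw [List.getD_eq_getElem M 0 hs]
      exact List.getElem_mem hs
    -- main fiberwise count
    have hfib : ∀ B ∈ validB S m l,
        (Finset.univ.filter fun P : Finpartition S =>
          PartCond S (m :: M) (l :: L) P ∧ P.part m = B).card = V := by
      intro B hB
      obtain ⟨hBS, hmB, hBle, hBcard⟩ := (mem_validB hm hl).1 hB
      have e := fiberEquiv (M := M) (L := L) hsort.1 hBS hmB hBle hBcard
      have h1 : (Finset.univ.filter fun P : Finpartition S =>
          PartCond S (m :: M) (l :: L) P ∧ P.part m = B).card =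
          Nat.card {P : Finpartition S //
            PartCond S (m :: M) (l :: L) P ∧ P.part m = B} := by
        rw [Nat.card_eq_fintype_card, Fintype.card_subtype]
      rw [h1, Nat.card_congr e, ih L (S \ B) hlen' hsort.2 ?memh ?posh ?sumh]
      case memh =>
        intro m' hm'
        refine Finset.mem_sdiff.2 ⟨hmem m' (List.mem_cons_of_mem m hm'), fun hc => ?_⟩
        exact absurd (hBle m' hc) (not_le.2 (hsort.1 m' hm'))
      case posh => exact fun x hx => hpos x (List.mem_cons_of_mem l hx)
      case sumh =>
        rw [Finset.card_sdiff_of_subset hBS, hBcard, ← hsum]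
        simp
      -- now show the products agree
      apply Finset.prod_congr rfl
      intro s hs
      rw [Finset.mem_range] at hs
      have hlt : ∀ x ∈ B, x < M.getD s 0 :=
        fun x hx => lt_of_le_of_lt (hBle x hx) (hsort.1 _ (hgetDmem s hs))
      have hfilter : (S \ B).filter (· < M.getD s 0) =
          (S.filter (· < M.getD s 0)) \ B := by
        ext x
        simp only [Finset.mem_filter, Finset.mem_sdiff]
        tauto
      have hsubf : B ⊆ S.filter (· < M.getD s 0) :=
        fun x hx => Finset.mem_filter.2 ⟨hBS hx, hlt x hx⟩
      rw [hfilter, Finset.card_sdiff_of_subset hsubf, hBcard]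
    -- put things together
    rw [Nat.card_eq_fintype_card, Fintype.card_subtype,
      Finset.card_eq_sum_card_fiberwise (f := fun P => P.part m) (t := validB S m l) ?hf]
    case hf =>
      intro P hP
      rw [Finset.mem_coe, Finset.mem_filter] at hP
      obtain ⟨B₀, hB₀, h1, h2, h3⟩ := hP.2.2 0 (Nat.succ_pos _)
      simp only [List.getD_cons_zero] at h1 h2 h3
      have hpe : P.part m = B₀ := Finpartition.part_eq_of_mem _ hB₀ h1
      show P.part m ∈ validB S m l
      rw [hpe, mem_validB hm hl]
      exact ⟨P.le hB₀, h1, h2, h3⟩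
    have : ∀ B ∈ validB S m l,
        ((Finset.univ.filter fun P : Finpartition S =>
          PartCond S (m :: M) (l :: L) P).filter fun P => P.part m = B).card = V := by
      intro B hB
      rw [Finset.filter_filter]
      exact hfib B hB
    rw [Finset.sum_congr rfl this, Finset.sum_const, smul_eq_mul, card_validB]
    -- massage the RHS product
    rw [List.length_cons, Finset.prod_range_succ']
    simp only [List.getD_cons_succ, List.getD_cons_zero, List.take_succ_cons,
      List.take_zero, List.sum_cons, List.sum_nil, Nat.sub_zero]
    rw [mul_comm]
    congr 1
    apply Finset.prod_congr rfl
    intro s _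
    rw [Nat.sub_sub]


/-- counting set partitions of {1,...,n} into k blocks with
block sizes I (ordered by increasing maxima) and block maxima the partial
sums of J. -/
theorem stmt0 (n k : ℕ) (I J : Composition n)
    (hI : I.length = k) (hJ : J.length = k) :
    Nat.card {P : Finpartition (Finset.Icc 1 n) //
      P.parts.card = k ∧
      ∀ s < k, ∃ B ∈ P.parts,
        ((J.blocks.take (s+1)).sum ∈ B ∧
         (∀ x ∈ B, x ≤ (J.blocks.take (s+1)).sum) ∧
         B.card = I.blocks.getD s 0)} =
    ∏ s ∈ Finset.range k,
      Nat.choose ((J.blocks.take (s+1)).sum - (I.blocks.take s).sum - 1)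
        (I.blocks.getD s 0 - 1) := by
  set g : ℕ → ℕ := fun t => (J.blocks.take t).sum with hg
  set M : List ℕ := (List.range k).map (fun s => g (s + 1)) with hM
  set L : List ℕ := I.blocks with hL
  have hJlen : J.blocks.length = k := by rw [← hJ]
  have hLlen : L.length = k := by rw [hL, ← hI]
  have hMlen : M.length = k := by simp [hM]
  have hgetD : ∀ s < k, M.getD s 0 = g (s + 1) := by
    intro s hs
    rw [hM, List.getD_eq_getElem _ 0 (by simpa using hs)]
    simp
  have hgmono : ∀ a b : ℕ, a ≤ b → g a ≤ g b := by
    intro a b hab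
    calc g a = ((J.blocks.take b).take a).sum := by
          rw [List.take_take, min_eq_left hab]
    _ ≤ g b := by
          have hh : ((J.blocks.take b).take a).sum + ((J.blocks.take b).drop a).sum
              = g b := by
            rw [← List.sum_append, List.take_append_drop]
          omega
  have hglt : ∀ s, s < k → g s < g (s + 1) := by
    intro s hs
    have hsl : s < J.blocks.length := by omega
    have h := List.sum_take_succ J.blocks s hsl
    have h2 := J.blocks_pos' s (hJ ▸ hs)
    simp only [hg]
    omega
  have hgpos : ∀ s < k, 0 < g (s + 1) := by
    intro s hs
    have := hglt s hs
    omega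
  have hgle : ∀ t, g t ≤ n := by
    intro t
    conv_rhs => rw [← J.blocks_sum, ← List.take_append_drop t J.blocks]
    rw [List.sum_append]
    exact Nat.le_add_right _ _
  have hstrict : ∀ a b, a < b → b < k → g (a + 1) < g (b + 1) := by
    intro a b hab hbk
    calc g (a + 1) ≤ g b := hgmono _ _ (by omega)
    _ < g (b + 1) := hglt b hbk
  have hsort : M.Pairwise (· < ·) := by
    rw [hM, List.pairwise_map]
    have := (List.pairwise_lt_range : List.Pairwise _ (List.range k))
    refine this.imp_of_mem ?_
    intro a b ha hb hlt
    exact hstrict a b hlt (by simpa using hb)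
  have hmem : ∀ m' ∈ M, m' ∈ Finset.Icc 1 n := by
    intro m' hm'
    rw [hM, List.mem_map] at hm'
    obtain ⟨s, hs, rfl⟩ := hm'
    rw [List.mem_range] at hs
    exact Finset.mem_Icc.2 ⟨hgpos s hs, hgle _⟩
  have hpos : ∀ x ∈ L, 0 < x := fun x hx => I.blocks_pos hx
  have hsum : L.sum = (Finset.Icc 1 n).card := by
    rw [hL, I.blocks_sum, Nat.card_Icc]
    omega
  have hfiltercard : ∀ v, 1 ≤ v → v ≤ n →
      ((Finset.Icc 1 n).filter (· < v)).card = v - 1 := by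
    intro v h1 h2
    have : (Finset.Icc 1 n).filter (· < v) = Finset.Icc 1 (v - 1) := by
      ext x
      simp only [Finset.mem_filter, Finset.mem_Icc, decide_eq_true_eq]
      omega
    rw [this, Nat.card_Icc]
    omega
  have hcond : ∀ P : Finpartition (Finset.Icc 1 n),
      (P.parts.card = k ∧
      ∀ s < k, ∃ B ∈ P.parts,
        (g (s+1) ∈ B ∧ (∀ x ∈ B, x ≤ g (s+1)) ∧ B.card = I.blocks.getD s 0)) ↔
      PartCond (Finset.Icc 1 n) M L P := by
    intro P
    unfold PartCond
    rw [hMlen]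
    constructor
    · rintro ⟨h1, h2⟩
      refine ⟨h1, fun s hs => ?_⟩
      rw [hgetD s hs]
      exact h2 s hs
    · rintro ⟨h1, h2⟩
      refine ⟨h1, fun s hs => ?_⟩
      have := h2 s hs
      rwa [hgetD s hs] at this
  rw [Nat.card_congr (Equiv.subtypeEquivRight hcond),
    key M L (Finset.Icc 1 n) (by rw [hMlen, hLlen]) hsort hmem hpos hsum, hMlen]
  apply Finset.prod_congr rfl
  intro s hs
  rw [Finset.mem_range] at hs
  rw [hgetD s hs, hfiltercard _ (hgpos s hs) (hgle _)]
  congr 1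
  simp only [hg, hL]
  omega
end

section
/- For any composition J = (j_1,...,j_k) of n of length k, the polynomial identity holds: the sum over all compositions I = (i_1,...,i_k) of n of length k of c_{IJ} · x_1^{i_1-1} x_2^{i_2-1} ··· x_k^{i_k-1} equals the product over s from 1 to k of (x_s + x_{s+1} + ... + x_k)^{j_s - 1}, where c_{IJ} = ∏_{s=1}^{k} binomial(j_1+...+j_s - (i_1+...+i_{s-1}) - 1, i_s - 1). -/
set_option maxRecDepth 4000

open MvPolynomial Finset

lemma map_sub_one_sum : ∀ (L : List ℕ), (∀ x ∈ L, 0 < x) →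
    (L.map (· - 1)).sum + L.length = L.sum := by
  intro L
  induction L with
  | nil => simp
  | cons a L ih =>
    intro h
    have ha := h a (by simp)
    have := ih (fun x hx => h x (by simp [hx]))
    simp only [List.map_cons, List.sum_cons, List.length_cons]
    omega

lemma getD_map_sub (L : List ℕ) (s : ℕ) (h : s < L.length) :
    (L.map (· - 1)).getD s 0 = L.getD s 0 - 1 := by
  rw [List.getD_eq_getElem _ _ (by simpa using h), List.getD_eq_getElem _ _ h,
    List.getElem_map]

lemma take_map_sub_sum (L : List ℕ) (hpos : ∀ x ∈ L, 0 < x) (m : ℕ) (hm : m ≤ L.length) :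
    ((L.map (· - 1)).take m).sum + m = (L.take m).sum := by
  rw [← List.map_take]
  have := map_sub_one_sum (L.take m) (fun x hx => hpos x (List.mem_of_mem_take hx))
  rwa [List.length_take, min_eq_left hm] at this
open Finset

lemma sum_adt_succ {M : Type*} [AddCommMonoid M] (k m : ℕ) (f : (Fin (k+1) → ℕ) → M) :
    ∑ d ∈ Finset.Nat.antidiagonalTuple (k+1) m, f d
      = ∑ p ∈ Finset.HasAntidiagonal.antidiagonal m, ∑ d ∈ Finset.Nat.antidiagonalTuple k p.2,
          f (Fin.cons p.1 d) := by
  rw [← Finset.sum_sigma (Finset.HasAntidiagonal.antidiagonal m) (fun p => Finset.Nat.antidiagonalTuple k p.2)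
    (fun x => f (Fin.cons x.1.1 x.2))]
  refine (Finset.sum_nbij' (f := f)
    (g := fun x : Σ _ : ℕ × ℕ, (Fin k → ℕ) => f (Fin.cons x.1.1 x.2))
    (fun d : Fin (k+1) → ℕ =>
      (⟨(d 0, ∑ i : Fin k, d i.succ), Fin.tail d⟩ : Σ _ : ℕ × ℕ, (Fin k → ℕ)))
    (fun x : Σ _ : ℕ × ℕ, (Fin k → ℕ) => Fin.cons x.1.1 x.2) ?_ ?_ ?_ ?_ ?_)
  · intro d hd
    simp only [Finset.Nat.mem_antidiagonalTuple, Fin.sum_univ_succ] at hd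
    refine Finset.mem_sigma.mpr ⟨Finset.HasAntidiagonal.mem_antidiagonal.mpr hd, ?_⟩
    simp [Finset.Nat.mem_antidiagonalTuple, Fin.tail]
  · intro x hx
    simp only [Finset.mem_sigma, Finset.HasAntidiagonal.mem_antidiagonal,
      Finset.Nat.mem_antidiagonalTuple] at hx
    simp [Finset.Nat.mem_antidiagonalTuple, Fin.sum_univ_succ, hx.1, hx.2]
  · intro d _; simp [Fin.cons_self_tail]
  · intro x hx
    simp only [Finset.mem_sigma, Finset.HasAntidiagonal.mem_antidiagonal,
      Finset.Nat.mem_antidiagonalTuple] at hx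
    ext1
    · simp [Fin.tail_cons, hx.2, Prod.ext_iff]
    · simp [Fin.tail_cons]
  · intro d _; simp [Fin.cons_self_tail]

lemma shift_sum {R : Type*} [AddCommMonoid R] (v : ℕ → R) (a c : ℕ) :
    ∑ t ∈ Finset.Ico (a+1) (c+1), v t = ∑ t ∈ Finset.Ico a c, v (t+1) := by
  rw [Finset.sum_Ico_eq_sum_range, Finset.sum_Ico_eq_sum_range]
  simp only [Nat.succ_sub_succ]
  exact Finset.sum_congr rfl fun i _ => by rw [Nat.add_right_comm]

lemma aux {R : Type*} [CommSemiring R] :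
    ∀ (k : ℕ) (B : List ℕ), B.length = k → ∀ v : ℕ → R,
    ∑ d ∈ Finset.Nat.antidiagonalTuple k B.sum,
      ((∏ s ∈ Finset.range k,
          Nat.choose ((B.take (s+1)).sum - ((List.ofFn d).take s).sum)
            ((List.ofFn d).getD s 0) : ℕ) : R) *
        ∏ s ∈ Finset.range k, v s ^ (List.ofFn d).getD s 0
      = ∏ s ∈ Finset.range k, (∑ t ∈ Finset.Ico s k, v t) ^ B.getD s 0 := by
  intro k
  induction k with
  | zero =>
    intro B hB v
    rw [List.length_eq_zero_iff] at hB
    subst hB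
    simp
  | succ k ih =>
    intro B hB v
    match B, hB with
    | b :: B', hB =>
    have hB' : B'.length = k := by simpa using hB
    rw [List.sum_cons, sum_adt_succ, Finset.Nat.sum_antidiagonal_eq_sum_range_succ_mk]
    have hfact : ∀ e : ℕ, ∀ d : Fin k → ℕ,
        ((∏ s ∈ Finset.range (k+1),
          Nat.choose (((b :: B').take (s+1)).sum - ((List.ofFn (Fin.cons e d)).take s).sum)
            ((List.ofFn (Fin.cons e d)).getD s 0) : ℕ) : R) *
          ∏ s ∈ Finset.range (k+1), v s ^ (List.ofFn (Fin.cons e d)).getD s 0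
        = (Nat.choose b e : R) * v 0 ^ e *
          (((∏ s ∈ Finset.range k,
            Nat.choose ((b + (B'.take (s+1)).sum) - (e + ((List.ofFn d).take s).sum))
              ((List.ofFn d).getD s 0) : ℕ) : R) *
          ∏ s ∈ Finset.range k, v (s+1) ^ (List.ofFn d).getD s 0) := by
      intro e d
      rw [Finset.prod_range_succ', Finset.prod_range_succ']
      simp only [List.ofFn_succ, Fin.cons_zero, Fin.cons_succ, List.take_succ_cons,
        List.take_zero, List.sum_cons, List.sum_nil, List.getD_cons_succ, List.getD_cons_zero,
        Nat.sub_zero, Nat.cast_mul]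
      push_cast
      have hh : (List.ofFn fun i => d i) = List.ofFn d := rfl
      rw [hh]
      generalize (∏ x ∈ Finset.range k, ((Nat.choose (b + (List.take (x + 1) B').sum - (e + (List.take x (List.ofFn d)).sum)) ((List.ofFn d).getD x 0) : ℕ) : R)) = A
      generalize (∏ x ∈ Finset.range k, v (x + 1) ^ (List.ofFn d).getD x 0) = P
      ring
    match B', hB' with
    | [], hB' =>
      obtain rfl : k = 0 := hB'.symm
      rw [Finset.sum_eq_single_of_mem b (by simp)]
      · have h0 : b + List.sum [] - b = 0 := by simp
        rw [h0, Finset.Nat.antidiagonalTuple_zero_zero, Finset.sum_singleton, hfact]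
        simp
      · intro e he hne
        have : b + List.sum [] - e ≠ 0 := by
          simp only [Finset.mem_range] at he
          simp only [List.sum_nil, Nat.add_zero] at *
          omega
        obtain ⟨c, hc⟩ := Nat.exists_eq_succ_of_ne_zero this
        rw [hc, Finset.Nat.antidiagonalTuple_zero_succ, Finset.sum_empty]
    | b₁ :: B'', hB' =>
      obtain rfl : k = B''.length + 1 := by simpa using hB'.symm
      set K := B''.length with hK
      set y : R := ∑ t ∈ Finset.Ico 0 (K+1), v (t+1) with hy
      set T : R := ∏ s ∈ Finset.range K,
        (∑ t ∈ Finset.Ico (s+1) (K+1), v (t+1)) ^ B''.getD s 0 with hT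
      have hmain : ∀ e ∈ Finset.range (b + (b₁ :: B'').sum + 1),
          (∑ d ∈ Finset.Nat.antidiagonalTuple (K+1) (b + (b₁ :: B'').sum - e),
            ((∏ s ∈ Finset.range (K+1+1),
              Nat.choose (((b :: b₁ :: B'').take (s+1)).sum
                  - ((List.ofFn (Fin.cons e d)).take s).sum)
                ((List.ofFn (Fin.cons e d)).getD s 0) : ℕ) : R) *
              ∏ s ∈ Finset.range (K+1+1), v s ^ (List.ofFn (Fin.cons e d)).getD s 0)
          = (Nat.choose b e : R) * v 0 ^ e * (y ^ (b + b₁ - e) * T) := by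
        intro e he
        simp only [hfact]
        rw [← Finset.mul_sum]
        by_cases heb : e ≤ b
        · have hsum : b + (b₁ :: B'').sum - e = (((b + b₁ - e) :: B'').sum) := by
            simp only [List.sum_cons]; omega
          rw [hsum]
          have hper : ∀ d ∈ Finset.Nat.antidiagonalTuple (K+1) (((b + b₁ - e) :: B'').sum),
              ((∏ s ∈ Finset.range (K+1),
                Nat.choose ((b + ((b₁ :: B'').take (s+1)).sum)
                    - (e + ((List.ofFn d).take s).sum))
                  ((List.ofFn d).getD s 0) : ℕ) : R) *
                ∏ s ∈ Finset.range (K+1), v (s+1) ^ (List.ofFn d).getD s 0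
              = ((∏ s ∈ Finset.range (K+1),
                Nat.choose ((((b + b₁ - e) :: B'').take (s+1)).sum
                    - ((List.ofFn d).take s).sum)
                  ((List.ofFn d).getD s 0) : ℕ) : R) *
                ∏ s ∈ Finset.range (K+1), (fun i => v (i+1)) s ^ (List.ofFn d).getD s 0 := by
            intro d _
            refine congrArg₂ (· * ·) (congrArg _ (Finset.prod_congr rfl fun s _ => ?_)) rfl
            have hte : b + ((b₁ :: B'').take (s+1)).sum - (e + ((List.ofFn d).take s).sum)
                = (((b + b₁ - e) :: B'').take (s+1)).sum - ((List.ofFn d).take s).sum := by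
              simp only [List.take_succ_cons, List.sum_cons]
              omega
            rw [hte]
          rw [Finset.sum_congr rfl hper, ih ((b + b₁ - e) :: B'') (by simp [hK]) (fun i => v (i+1))]
          have hp : (∏ s ∈ Finset.range (K+1),
              (∑ t ∈ Finset.Ico s (K+1), v (t+1)) ^ (((b + b₁ - e) :: B'').getD s 0))
              = y ^ (b + b₁ - e) * T := by
            rw [Finset.prod_range_succ', mul_comm]
            congr 1 <;>
              first
                | rfl
                | simp [← hy]
                | (rw [hT]; exact Finset.prod_congr rfl fun s _ => by simp)
          rw [hp]
        · have hc0 : Nat.choose b e = 0 := Nat.choose_eq_zero_of_lt (by omega)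
          simp [hc0]
      rw [Finset.sum_congr rfl hmain]
      -- restrict the sum to e ≤ b
      rw [← Finset.sum_subset (Finset.range_subset_range.mpr (by simp [List.sum_cons] :
            b + 1 ≤ b + (b₁ :: B'').sum + 1))
          (fun e _ he => by
            have : b < e := by
              simp only [Finset.mem_range, not_lt] at he
              omega
            simp [Nat.choose_eq_zero_of_lt this])]
      -- compute the RHS product
      rw [Finset.prod_range_succ', Finset.prod_range_succ']
      have hg1 : ∀ s : ℕ, ∑ t ∈ Finset.Ico (s+1) (K+1+1), v t = ∑ t ∈ Finset.Ico s (K+1), v (t+1) :=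
        fun s => shift_sum v s (K+1)
      have hy2 : ∑ t ∈ Finset.Ico 0 (K+1+1), v t = v 0 + y := by
        rw [hy, ← Finset.range_eq_Ico, ← Finset.range_eq_Ico]
        exact (Finset.sum_range_succ' v (K+1)).trans (add_comm _ _)
      have hrhs : (∏ s ∈ Finset.range K,
            (∑ t ∈ Finset.Ico (s+1+1) (K+1+1), v t) ^ ((b :: b₁ :: B'').getD (s+1+1) 0)) *
            (∑ t ∈ Finset.Ico (0+1) (K+1+1), v t) ^ ((b :: b₁ :: B'').getD (0+1) 0) *
            (∑ t ∈ Finset.Ico 0 (K+1+1), v t) ^ ((b :: b₁ :: B'').getD 0 0)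
          = T * y ^ b₁ * (v 0 + y) ^ b := by
        rw [hy2]
        congr 1
        · congr 1
          · rw [hT]
            refine Finset.prod_congr rfl fun s _ => ?_
            rw [hg1 (s+1)]
            simp
          · rw [hg1 0, ← hy]
            simp
      rw [hrhs]
      -- binomial theorem
      rw [add_pow, Finset.mul_sum]
      refine Finset.sum_congr rfl fun e he => ?_
      have heb : e ≤ b := by
        simp only [Finset.mem_range] at he
        omega
      have : b + b₁ - e = (b - e) + b₁ := by omega
      rw [this, pow_add]
      ring

/-- the generating polynomial of the column `J` of the matrix
`(c_{IJ})` is `∏_s (x_s + ⋯ + x_k)^{j_s-1}`. -/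
theorem stmt1 (n k : ℕ) (J : Composition n) (hJ : J.length = k) :
    ∑ I ∈ Finset.univ.filter (fun I : Composition n => I.length = k),
      ((∏ s ∈ Finset.range k,
        Nat.choose ((J.blocks.take (s+1)).sum - (I.blocks.take s).sum - 1)
          (I.blocks.getD s 0 - 1) : ℕ) : MvPolynomial (Fin k) ℚ) *
        ∏ s : Fin k, (X s) ^ (I.blocks.getD s.val 0 - 1)
    = ∏ s : Fin k,
        (∑ t ∈ Finset.univ.filter (fun t : Fin k => s ≤ t), X t)
          ^ (J.blocks.getD s.val 0 - 1) := by
  classical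
  have hkn : k ≤ n := hJ ▸ J.length_le
  have hJlen : J.blocks.length = k := hJ
  set v : ℕ → MvPolynomial (Fin k) ℚ :=
    fun i => if h : i < k then X (⟨i, h⟩ : Fin k) else 0 with hv
  set B : List ℕ := J.blocks.map (· - 1) with hB
  have hBlen : B.length = k := by simp [hB, hJlen]
  have key := aux k B hBlen v
  have hBsum : B.sum = n - k := by
    have h2 := map_sub_one_sum J.blocks (fun x hx => J.blocks_pos hx)
    rw [hJlen, J.blocks_sum] at h2
    rw [hB]
    omega
  -- step 1 : LHS = aux LHS
  have step1 : ∑ I ∈ Finset.univ.filter (fun I : Composition n => I.length = k),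
      ((∏ s ∈ Finset.range k,
        Nat.choose ((J.blocks.take (s+1)).sum - (I.blocks.take s).sum - 1)
          (I.blocks.getD s 0 - 1) : ℕ) : MvPolynomial (Fin k) ℚ) *
        ∏ s : Fin k, (X s) ^ (I.blocks.getD s.val 0 - 1)
      = ∑ d ∈ Finset.Nat.antidiagonalTuple k B.sum,
        ((∏ s ∈ Finset.range k,
            Nat.choose ((B.take (s+1)).sum - ((List.ofFn d).take s).sum)
              ((List.ofFn d).getD s 0) : ℕ) : MvPolynomial (Fin k) ℚ) *
          ∏ s ∈ Finset.range k, v s ^ (List.ofFn d).getD s 0 := by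
    have hlist : ∀ I : Composition n, I.blocks.length = k →
        (List.ofFn fun s : Fin k => I.blocks.getD s.val 0 - 1) = I.blocks.map (· - 1) := by
      intro I hI
      refine List.ext_getElem (by simp [hI]) ?_
      intro m h1 h2
      simp only [List.getElem_ofFn, List.getElem_map]
      rw [List.getD_eq_getElem _ _ (by simp only [List.length_ofFn] at h1; omega)]
    have hsum : ∀ d : Fin k → ℕ, (∑ s : Fin k, d s) = B.sum →
        (List.ofFn fun s : Fin k => d s + 1).sum = n := by
      intro d hd
      have h3 : ∑ s : Fin k, (d s + 1) = (∑ s : Fin k, d s) + k := by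
        rw [Finset.sum_add_distrib]
        simp
      rw [List.sum_ofFn, h3, hd, hBsum]
      omega
    refine Finset.sum_nbij'
      (fun I : Composition n => fun s : Fin k => I.blocks.getD s.val 0 - 1)
      (fun d : Fin k → ℕ =>
        if h : (List.ofFn fun s : Fin k => d s + 1).sum = n then
          ⟨List.ofFn fun s : Fin k => d s + 1,
            (fun {i} hi => by
                rcases List.mem_ofFn.mp hi with ⟨y, hy⟩
                omega),
            h⟩
        else Composition.ones n)
      ?_ ?_ ?_ ?_ ?_
    · intro I hI
      have hIl : I.blocks.length = k := (Finset.mem_filter.mp hI).2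
      simp only [Finset.Nat.mem_antidiagonalTuple]
      have h1 : ∑ s : Fin k, (I.blocks.getD s.val 0 - 1)
          = (List.ofFn fun s : Fin k => I.blocks.getD s.val 0 - 1).sum := List.sum_ofFn.symm
      rw [h1, hlist I hIl]
      have h2 := map_sub_one_sum I.blocks (fun x hx => I.blocks_pos hx)
      rw [hIl, I.blocks_sum] at h2
      omega
    · intro d hd
      simp only [Finset.Nat.mem_antidiagonalTuple] at hd
      have hc := hsum d hd
      simp only [dif_pos hc, Finset.mem_filter, Finset.mem_univ, true_and]
      show (List.ofFn fun s : Fin k => d s + 1).length = k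
      simp
    · intro I hI
      have hIl : I.blocks.length = k := (Finset.mem_filter.mp hI).2
      have hlist2 : (List.ofFn fun s : Fin k => (I.blocks.getD s.val 0 - 1) + 1) = I.blocks := by
        refine List.ext_getElem (by simp [hIl]) ?_
        intro m h1 h2
        simp only [List.getElem_ofFn]
        rw [List.getD_eq_getElem _ _ (by simp only [List.length_ofFn] at h1; omega)]
        have := I.blocks_pos (I.blocks.getElem_mem h2)
        omega
      have hc : (List.ofFn fun s : Fin k => (I.blocks.getD s.val 0 - 1) + 1).sum = n := by
        rw [hlist2, I.blocks_sum]
      apply Composition.ext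
      simp only [dif_pos hc]
      exact hlist2
    · intro d hd
      simp only [Finset.Nat.mem_antidiagonalTuple] at hd
      have hc := hsum d hd
      funext s
      simp only [dif_pos hc]
      show (List.ofFn fun s : Fin k => d s + 1).getD s.val 0 - 1 = d s
      rw [List.getD_eq_getElem _ _ (by simp)]
      simp [List.getElem_ofFn]
    · intro I hI
      have hIl : I.blocks.length = k := (Finset.mem_filter.mp hI).2
      beta_reduce
      rw [hlist I hIl]
      refine congrArg₂ (· * ·) (congrArg _ (Finset.prod_congr rfl fun s hs => ?_)) ?_
      · simp only [Finset.mem_range] at hs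
        have hJt := take_map_sub_sum J.blocks (fun x hx => J.blocks_pos hx) (s+1)
          (by omega)
        have hIt := take_map_sub_sum I.blocks (fun x hx => I.blocks_pos hx) s (by omega)
        have hb : (I.blocks.map (· - 1)).getD s 0 = I.blocks.getD s 0 - 1 :=
          getD_map_sub _ _ (by omega)
        rw [hb, hB]
        congr 1
        omega
      · rw [← Fin.prod_univ_eq_prod_range
          (fun s => v s ^ ((I.blocks.map (· - 1)).getD s 0)) k]
        refine Finset.prod_congr rfl fun s _ => ?_
        have hb : (I.blocks.map (· - 1)).getD s.val 0 = I.blocks.getD s.val 0 - 1 :=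
          getD_map_sub _ _ (by omega)
        rw [hb]
        simp only [hv, dif_pos s.isLt, Fin.eta]
  rw [step1, key]
  -- step 2 : aux RHS = RHS
  rw [← Fin.prod_univ_eq_prod_range (fun s => (∑ t ∈ Finset.Ico s k, v t) ^ B.getD s 0) k]
  refine Finset.prod_congr rfl fun s _ => ?_
  have h1 : B.getD s.val 0 = J.blocks.getD s.val 0 - 1 :=
    getD_map_sub _ _ (by rw [hJlen]; exact s.isLt)
  rw [h1]
  congr 1
  refine Finset.sum_nbij' (fun t => if h : t < k then (⟨t, h⟩ : Fin k) else s)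
    (fun t : Fin k => t.val) ?_ ?_ ?_ ?_ ?_
  · intro t ht
    simp only [Finset.mem_Ico] at ht
    simp only [Finset.mem_filter, Finset.mem_univ, true_and, dif_pos ht.2]
    exact ht.1
  · intro t ht
    simp only [Finset.mem_filter, Finset.mem_univ, true_and] at ht
    simp only [Finset.mem_Ico]
    exact ⟨ht, t.isLt⟩
  · intro t ht
    simp only [Finset.mem_Ico] at ht
    simp only [dif_pos ht.2]
  · intro t _
    simp only [dif_pos t.isLt, Fin.eta]
  · intro t ht
    simp only [Finset.mem_Ico] at ht
    simp only [hv, dif_pos ht.2]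
end

section
/- The column sums of the matrix (c_{IJ}) satisfy: for any composition I = (i_1,...,i_k) of n of length k, the sum over all compositions J = (j_1,...,j_k) of n of length k of ∏_{s=1}^{k} binomial(j_1+...+j_s - (i_1+...+i_{s-1}) - 1, i_s - 1) equals ∏_{s=2}^{k} binomial(i_1+...+i_s - 1, i_1+...+i_{s-1}). -/
open Finset

/-- hockey stick -/
lemma hockey (N a : ℕ) : ∑ j ∈ range N, j.choose a = N.choose (a+1) := by
  induction N with
  | zero => simp
  | succ N ih =>
    rw [Finset.sum_range_succ, ih, Nat.choose_succ_succ', Nat.add_comm]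

/-- trinomial revision -/
lemma trinom (m a b : ℕ) : m.choose a * (m - a).choose b = (a+b).choose a * m.choose (a+b) := by
  by_cases h : a + b ≤ m
  · have := Nat.choose_mul (n := m) (Nat.le_add_right a b)
    rw [Nat.add_sub_cancel_left] at this
    rw [← this, Nat.mul_comm]
  · push_neg at h
    rw [Nat.choose_eq_zero_of_lt h, Nat.mul_zero]
    by_cases ha : a ≤ m
    · rw [Nat.choose_eq_zero_of_lt (by omega : m - a < b), Nat.mul_zero]
    · rw [Nat.choose_eq_zero_of_lt (by omega), Nat.zero_mul]

/-- lists of length k of positive naturals summing to n -/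
def CL : ℕ → ℕ → Finset (List ℕ)
  | n, 0 => if n = 0 then {([] : List ℕ)} else ∅
  | n, (k+1) => (Finset.Icc 1 n).biUnion fun j => (CL (n - j) k).image (· ++ [j])

lemma mem_CL {n k : ℕ} {L : List ℕ} :
    L ∈ CL n k ↔ L.length = k ∧ L.sum = n ∧ ∀ x ∈ L, 0 < x := by
  induction k generalizing n L with
  | zero =>
    rw [CL]
    split_ifs with h
    · subst h
      simp only [Finset.mem_singleton]
      constructor
      · rintro rfl; simp
      · rintro ⟨h1, h2, h3⟩; exact List.length_eq_zero_iff.mp h1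
    · simp only [Finset.notMem_empty, false_iff]
      rintro ⟨h1, h2, h3⟩
      obtain rfl := List.length_eq_zero_iff.mp h1
      simp at h2
      exact h h2.symm
  | succ k ih =>
    rw [CL]
    simp only [Finset.mem_biUnion, Finset.mem_image, Finset.mem_Icc]
    constructor
    · rintro ⟨j, ⟨hj1, hj2⟩, L', hL', rfl⟩
      rw [ih] at hL'
      obtain ⟨h1, h2, h3⟩ := hL'
      refine ⟨by simp [h1], by simp [h2]; omega, ?_⟩
      intro x hx
      rcases List.mem_append.mp hx with h | h
      · exact h3 x h
      · simp at h; omega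
    · rintro ⟨h1, h2, h3⟩
      rcases List.eq_nil_or_concat L with rfl | ⟨L', a, rfl⟩
      · simp at h1
      · simp only [List.concat_eq_append] at h1 h2 h3 ⊢
        have ha : 0 < a := h3 a (by simp)
        have hsum : L'.sum + a = n := by simpa using h2
        refine ⟨a, ⟨ha, by omega⟩, L', ?_, rfl⟩
        rw [ih]
        refine ⟨by simpa using h1, by omega, fun x hx => h3 x (by simp [hx])⟩

lemma CL_zero {k : ℕ} (hk : 1 ≤ k) : CL 0 k = ∅ := by
  rw [Finset.eq_empty_iff_forall_notMem]
  intro L hL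
  rw [mem_CL] at hL
  obtain ⟨h1, h2, h3⟩ := hL
  rcases L with _ | ⟨a, L⟩
  · simp at h1; omega
  · have := h3 a (by simp)
    simp at h2
    omega

lemma core (b : ℕ → ℕ) : ∀ k, 1 ≤ k → ∀ n, 1 ≤ n → (∀ s, s < k → 1 ≤ b s) →
    ∑ L ∈ CL n k, ∏ s ∈ Finset.range k,
      Nat.choose ((L.take (s+1)).sum - (∑ r ∈ Finset.range s, b r) - 1) (b s - 1)
    = (∏ s ∈ Finset.Ico 1 k, Nat.choose ((∑ r ∈ Finset.range (s+1), b r) - 1)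
        (∑ r ∈ Finset.range s, b r)) *
      Nat.choose (n - 1) ((∑ r ∈ Finset.range k, b r) - 1) := by
  intro k hk
  induction k, hk using Nat.le_induction with
  | base =>
    intro n hn hb
    have hCL : CL n 1 = {[n]} := by
      ext L
      rw [mem_CL, Finset.mem_singleton]
      constructor
      · rintro ⟨h1, h2, h3⟩
        obtain ⟨a, rfl⟩ := List.length_eq_one_iff.mp h1
        simp at h2; subst h2; rfl
      · rintro rfl
        exact ⟨rfl, by simp, by intro x hx; simp at hx; omega⟩
    rw [hCL]
    simp
  | succ k hk ih =>
    intro n hn hb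
    obtain ⟨n', rfl⟩ : ∃ n', n = n' + 1 := ⟨n - 1, by omega⟩
    have hbk : 1 ≤ b k := hb k (by omega)
    have ht1 : 1 ≤ ∑ r ∈ Finset.range k, b r :=
      le_trans (hb 0 (by omega))
        (Finset.single_le_sum (f := b) (fun i _ => Nat.zero_le _)
          (Finset.mem_range.mpr (by omega)))
    have hdisj : ((Finset.Icc 1 (n'+1)) : Set ℕ).PairwiseDisjoint
        (fun j => (CL (n'+1 - j) k).image (· ++ [j])) := by
      intro j hj j' hj' hne
      simp only [Function.onFun]
      rw [Finset.disjoint_left]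
      intro L hL hL'
      simp only [Finset.mem_image] at hL hL'
      obtain ⟨A, hA, rfl⟩ := hL
      obtain ⟨B, hB, hBe⟩ := hL'
      have lA : A.length = k := (mem_CL.mp hA).1
      have lB : B.length = k := (mem_CL.mp hB).1
      have h2 := List.append_inj_right hBe (by rw [lA, lB])
      simp only [List.cons.injEq, and_true] at h2
      exact hne h2.symm
    rw [CL, Finset.sum_biUnion hdisj]
    have step1 : ∀ j ∈ Finset.Icc 1 (n'+1),
        ∑ L ∈ (CL (n'+1-j) k).image (· ++ [j]), ∏ s ∈ Finset.range (k+1),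
          Nat.choose ((L.take (s+1)).sum - (∑ r ∈ Finset.range s, b r) - 1) (b s - 1)
        = (∑ L ∈ CL (n'+1-j) k, ∏ s ∈ Finset.range k,
            Nat.choose ((L.take (s+1)).sum - (∑ r ∈ Finset.range s, b r) - 1) (b s - 1)) *
          Nat.choose (n'+1 - (∑ r ∈ Finset.range k, b r) - 1) (b k - 1) := by
      intro j hj
      have hj' := Finset.mem_Icc.mp hj
      rw [Finset.sum_image (fun x _ y _ h => List.append_left_injective _ h)]
      rw [Finset.sum_congr rfl (fun L' hL' => ?_), ← Finset.sum_mul]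
      obtain ⟨hlen, hsum, -⟩ := mem_CL.mp hL'
      rw [Finset.prod_range_succ]
      congr 1
      · refine Finset.prod_congr rfl (fun s hs => ?_)
        rw [List.take_append_of_le_length
          (by rw [hlen]; exact Nat.succ_le_of_lt (Finset.mem_range.mp hs))]
      · congr 2
        rw [List.take_of_length_le (by simp [hlen]), List.sum_append]
        simp only [List.sum_cons, List.sum_nil]
        omega
    rw [Finset.sum_congr rfl step1, ← Finset.sum_mul]
    have reindex :
        ∑ j ∈ Finset.Icc 1 (n'+1), (∑ L ∈ CL (n'+1-j) k, ∏ s ∈ Finset.range k,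
            Nat.choose ((L.take (s+1)).sum - (∑ r ∈ Finset.range s, b r) - 1) (b s - 1))
        = ∑ m ∈ Finset.range (n'+1), (∑ L ∈ CL m k, ∏ s ∈ Finset.range k,
            Nat.choose ((L.take (s+1)).sum - (∑ r ∈ Finset.range s, b r) - 1) (b s - 1)) := by
      refine Finset.sum_nbij' (i := fun j => n'+1-j) (j := fun m => n'+1-m)
        ?_ ?_ ?_ ?_ ?_
      all_goals intro a ha
      all_goals simp only [Finset.mem_Icc, Finset.mem_range] at *
      all_goals first | rfl | omega
    rw [reindex, Finset.sum_range_succ', CL_zero hk, Finset.sum_empty, Nat.add_zero]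
    rw [Finset.sum_congr rfl
      (fun m _ => ih (m+1) (by omega) (fun s hs => hb s (by omega)))]
    simp only [Nat.add_sub_cancel]
    rw [← Finset.mul_sum, hockey]
    have ht' : (∑ r ∈ Finset.range k, b r) - 1 + 1 = ∑ r ∈ Finset.range k, b r := by omega
    rw [ht']
    rw [Finset.prod_Ico_succ_top hk, Finset.sum_range_succ]
    have e1 : n' + 1 - (∑ r ∈ Finset.range k, b r) - 1 = n' - (∑ r ∈ Finset.range k, b r) := by
      omega
    have e2 : (∑ r ∈ Finset.range k, b r) + b k - 1
        = (∑ r ∈ Finset.range k, b r) + (b k - 1) := by omega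
    rw [e1, e2, Nat.mul_assoc, trinom n' (∑ r ∈ Finset.range k, b r) (b k - 1),
      ← Nat.mul_assoc]

lemma take_sum (L : List ℕ) : ∀ s : ℕ, (L.take s).sum = ∑ r ∈ Finset.range s, L.getD r 0 := by
  induction L with
  | nil => intro s; simp
  | cons a L ih =>
    intro s
    cases s with
    | zero => simp
    | succ s =>
      rw [List.take_succ_cons, List.sum_cons, ih s, Finset.sum_range_succ']
      simp [Nat.add_comm]

lemma transfer (n k : ℕ) (f : List ℕ → ℕ) :
    ∑ J ∈ Finset.univ.filter (fun J : Composition n => J.length = k), f J.blocks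
    = ∑ L ∈ CL n k, f L := by
  refine Finset.sum_bij' (i := fun J _ => J.blocks)
    (j := fun L hL => ⟨L, fun {x} hx => (mem_CL.mp hL).2.2 x hx, (mem_CL.mp hL).2.1⟩)
    ?_ ?_ ?_ ?_ ?_
  · intro J hJ
    rw [mem_CL]
    exact ⟨(Finset.mem_filter.mp hJ).2, J.blocks_sum, fun x hx => J.blocks_pos hx⟩
  · intro L hL
    rw [Finset.mem_filter]
    exact ⟨Finset.mem_univ _, (mem_CL.mp hL).1⟩
  · intro J hJ
    rfl
  · intro L hL
    rfl
  · intro J hJ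
    rfl

/-- column sums of the matrices `(c_{IJ})`. -/
theorem stmt2 (n k : ℕ) (I : Composition n) (hI : I.length = k) :
    ∑ J ∈ Finset.univ.filter (fun J : Composition n => J.length = k),
      ∏ s ∈ Finset.range k,
        Nat.choose ((J.blocks.take (s+1)).sum - (I.blocks.take s).sum - 1)
          (I.blocks.getD s 0 - 1)
    = ∏ s ∈ Finset.Ico 1 k,
        Nat.choose ((I.blocks.take (s+1)).sum - 1) ((I.blocks.take s).sum) := by
  rcases Nat.eq_zero_or_pos k with rfl | hk
  · have hI0 : I.blocks = [] := List.length_eq_zero_iff.mp hI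
    have hn0 : n = 0 := by rw [← I.blocks_sum, hI0]; rfl
    subst hn0
    have hall : ∀ J : Composition 0, J.length = 0 := by
      intro J
      rcases hJ : J.blocks with _ | ⟨a, l⟩
      · simp [Composition.length, hJ]
      · exfalso
        have ha : 0 < a := J.blocks_pos (by rw [hJ]; exact List.mem_cons_self (a := a) (l := l))
        have hs := J.blocks_sum
        rw [hJ] at hs
        simp at hs
        omega
    simp only [Finset.prod_range_zero]
    rw [Finset.filter_true_of_mem (fun J _ => hall J), Finset.sum_const, Finset.card_univ,
      composition_card]
    simp
  · have hn : 1 ≤ n := by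
      rcases hB : I.blocks with _ | ⟨a, l⟩
      · rw [Composition.length, hB] at hI; simp at hI; omega
      · have ha : 0 < a := I.blocks_pos (by rw [hB]; exact List.mem_cons_self (a := a) (l := l))
        have hs := I.blocks_sum
        rw [hB] at hs
        simp at hs
        omega
    have hsumk : ∑ r ∈ Finset.range k, I.blocks.getD r 0 = n := by
      rw [← take_sum, ← hI, Composition.length, List.take_length, I.blocks_sum]
    simp only [take_sum I.blocks]
    rw [transfer n k (fun L => ∏ s ∈ Finset.range k,
      Nat.choose ((L.take (s+1)).sum - (∑ r ∈ Finset.range s, I.blocks.getD r 0) - 1)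
        (I.blocks.getD s 0 - 1))]
    rw [core (fun s => I.blocks.getD s 0) k hk n hn ?_]
    · rw [hsumk, Nat.choose_self, Nat.mul_one]
    · intro s hs
      have : s < I.blocks.length := by rw [← Composition.length, hI]; exact hs
      have h1 : I.blocks.getD s 0 = I.blocks[s] := List.getD_eq_getElem I.blocks 0 this
      show 1 ≤ I.blocks.getD s 0
      rw [h1]
      exact I.blocks_pos (List.getElem_mem this)
end

section
/- For any positive integers n and k with k ≤ n, the total sum over all pairs (I, J) of compositions of n of length k of the coefficients c_{IJ} = ∏_{s=1}^{k} binomial(j_1+...+j_s - (i_1+...+i_{s-1}) - 1, i_s - 1) equals the Stirling number of the second kind S(n,k). -/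
open Finset

/-- partial sums: psums l = [l₀, l₀+l₁, ...] -/
def psums (l : List ℕ) : List ℕ := (List.range l.length).map fun s => (l.take (s+1)).sum

lemma psums_cons (a : ℕ) (l : List ℕ) : psums (a :: l) = a :: (psums l).map (a + ·) := by
  simp only [psums, List.length_cons, List.range_succ_eq_map, List.map_cons, List.map_map]
  simp [Function.comp, List.take_succ_cons]

lemma psums_length (l : List ℕ) : (psums l).length = l.length := by simp [psums]

lemma psums_pos (l : List ℕ) (h : ∀ i ∈ l, 0 < i) : ∀ x ∈ psums l, 0 < x := by
  induction l with
  | nil => simp [psums]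
  | cons a t ih =>
    rw [psums_cons]
    intro x hx
    have ha := h a (by simp)
    rcases List.mem_cons.1 hx with h' | hx
    · omega
    · obtain ⟨y, hy, rfl⟩ := List.mem_map.1 hx
      omega

lemma psums_pairwise (l : List ℕ) (h : ∀ i ∈ l, 0 < i) : (psums l).Pairwise (· < ·) := by
  induction l with
  | nil => simp [psums]
  | cons a t ih =>
    rw [psums_cons]
    refine List.Pairwise.cons ?_ ?_
    · intro x hx
      obtain ⟨y, hy, rfl⟩ := List.mem_map.1 hx
      have := psums_pos t (fun i hi => h i (by simp [hi])) y hy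
      omega
    · exact (List.pairwise_map).2 <| (ih (fun i hi => h i (by simp [hi]))).imp (by omega)

lemma psums_inj : ∀ {l₁ l₂ : List ℕ}, psums l₁ = psums l₂ → l₁ = l₂ := by
  intro l₁
  induction l₁ with
  | nil => intro l₂ h; cases l₂ with
    | nil => rfl
    | cons a t => simp [psums, psums_cons] at h
  | cons a t ih =>
    intro l₂ h
    cases l₂ with
    | nil => simp [psums, psums_cons] at h
    | cons b u =>
      rw [psums_cons, psums_cons] at h
      obtain ⟨rfl, h2⟩ := List.cons_eq_cons.1 h
      congr 1
      apply ih
      have hinj : Function.Injective (a + ·) := fun x y hxy => by simpa using hxy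
      exact List.map_injective_iff.2 hinj h2

lemma psums_getD (l : List ℕ) (s : ℕ) (hs : s < l.length) :
    (psums l).getD s 0 = (l.take (s+1)).sum := by
  rw [psums, List.getD_eq_getElem _ _ (by simpa [psums] using hs)]
  simp

lemma psums_mem_le (l : List ℕ) : ∀ x ∈ psums l, x ≤ l.sum := by
  intro x hx
  obtain ⟨s, hs, rfl⟩ := List.mem_map.1 hx
  exact List.Sublist.sum_le_sum (List.take_sublist _ _) (by simp)

lemma psums_getLast (l : List ℕ) (h : l ≠ []) :
    (psums l).getD (l.length - 1) 0 = l.sum := by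
  have hl : 0 < l.length := List.length_pos_iff.2 h
  rw [psums_getD l _ (by omega)]
  have : l.length - 1 + 1 = l.length := by omega
  rw [this, List.take_length]


def blockTuples : Finset ℕ → List ℕ → List ℕ → Finset (List (Finset ℕ))
  | _, [], _ => {[]}
  | _, _ :: _, [] => {[]}
  | A, i :: is, M :: Ms =>
    ((A.filter (· < M)).powersetCard (i - 1)).biUnion fun S =>
      if M ∈ A then (blockTuples (A \ insert M S) is Ms).image (insert M S :: ·) else ∅

lemma sup_id_mem {B : Finset ℕ} (h : B.Nonempty) : B.sup id ∈ B := by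
  have := Finset.max'_mem B h
  rwa [Finset.max'_eq_sup' , Finset.sup'_eq_sup h id] at this

lemma le_sup_id {B : Finset ℕ} {x : ℕ} (h : x ∈ B) : x ≤ B.sup id := Finset.le_sup (f := id) h

lemma sup_id_insert {M : ℕ} {S : Finset ℕ} (h : ∀ x ∈ S, x < M) : (insert M S).sup id = M := by
  rw [Finset.sup_insert]
  exact max_eq_left (Finset.sup_le fun x hx => le_of_lt (h x hx))

lemma card_bt : ∀ (is Ms : List ℕ) (A : Finset ℕ), is.length = Ms.length →
    (∀ i ∈ is, 0 < i) → Ms.Pairwise (· < ·) → (∀ M ∈ Ms, M ∈ A) →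
    (blockTuples A is Ms).card
      = ∏ s ∈ Finset.range is.length,
          Nat.choose ((A.filter (· < Ms.getD s 0)).card - (is.take s).sum)
            (is.getD s 0 - 1) := by
  intro is
  induction is with
  | nil => intro Ms A _ _ _ _; simp [blockTuples]
  | cons i is ih =>
    intro Ms A hlen hpos hpw hMA
    cases Ms with
    | nil => simp at hlen
    | cons M Ms =>
      have hMA0 : M ∈ A := hMA M (by simp)
      have hipos : 0 < i := hpos i (by simp)
      have hlen' : is.length = Ms.length := by simpa using hlen
      have hMlt : ∀ M' ∈ Ms, M < M' := fun M' h => (List.pairwise_cons.1 hpw).1 M' h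
      set P := (A.filter (· < M)).powersetCard (i - 1) with hP
      have hS_sub : ∀ S ∈ P, S ⊆ A.filter (· < M) := fun S hS => (Finset.mem_powersetCard.1 hS).1
      have hS_card : ∀ S ∈ P, S.card = i - 1 := fun S hS => (Finset.mem_powersetCard.1 hS).2
      have hMnotS : ∀ S ∈ P, M ∉ S := by
        intro S hS hM
        have := hS_sub S hS hM
        simp at this
      have hB_card : ∀ S ∈ P, (insert M S).card = i := by
        intro S hS
        rw [Finset.card_insert_of_notMem (hMnotS S hS), hS_card S hS]
        omega
      have hB_sub : ∀ S ∈ P, ∀ M' ∈ Ms, insert M S ⊆ A.filter (· < M') := by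
        intro S hS M' hM'
        intro x hx
        rcases Finset.mem_insert.1 hx with rfl | hx
        · exact Finset.mem_filter.2 ⟨hMA0, hMlt M' hM'⟩
        · have := hS_sub S hS hx
          rw [Finset.mem_filter] at this ⊢
          exact ⟨this.1, lt_trans this.2 (hMlt M' hM')⟩
      rw [show blockTuples A (i :: is) (M :: Ms) =
        P.biUnion (fun S =>
          if M ∈ A then (blockTuples (A \ insert M S) is Ms).image (insert M S :: ·) else ∅) from rfl]
      rw [Finset.card_biUnion ?disj]
      case disj =>
        intro S₁ h₁ S₂ h₂ hne
        simp only [if_pos hMA0]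
        rw [Function.onFun, Finset.disjoint_left]
        rintro L hL₁ hL₂
        obtain ⟨L₁, _, rfl⟩ := Finset.mem_image.1 hL₁
        obtain ⟨L₂, _, hEq⟩ := Finset.mem_image.1 hL₂
        apply hne
        have hhd : insert M S₂ = insert M S₁ := (List.cons_eq_cons.1 hEq).1
        have := congrArg (Finset.erase · M) hhd
        simpa [Finset.erase_insert (hMnotS S₂ h₂), Finset.erase_insert (hMnotS S₁ h₁)] using this.symm
      have hterm : ∀ S ∈ P,
          (if M ∈ A then (blockTuples (A \ insert M S) is Ms).image (insert M S :: ·) else ∅).card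
          = ∏ s ∈ Finset.range is.length,
              Nat.choose ((A.filter (· < Ms.getD s 0)).card - i - (is.take s).sum)
                (is.getD s 0 - 1) := by
        intro S hS
        rw [if_pos hMA0, Finset.card_image_of_injective _ (fun a b h => (List.cons_eq_cons.1 h).2)]
        rw [ih Ms (A \ insert M S) (by simpa using hlen) (fun j hj => hpos j (by simp [hj]))
          hpw.of_cons ?hMA']
        case hMA' =>
          intro M' hM'
          rw [Finset.mem_sdiff]
          refine ⟨hMA M' (by simp [hM']), fun hmem => ?_⟩
          have := hB_sub S hS M' hM' hmem
          simp at this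
        refine Finset.prod_congr rfl fun s hs => ?_
        have hsl : s < is.length := Finset.mem_range.1 hs
        have hsM : Ms.getD s 0 ∈ Ms := by
          rw [List.getD_eq_getElem _ _ (by omega : s < Ms.length)]
          exact List.getElem_mem _
        congr 1
        have hfil : (A \ insert M S).filter (· < Ms.getD s 0)
            = A.filter (· < Ms.getD s 0) \ insert M S := by
          ext x; simp only [Finset.mem_filter, Finset.mem_sdiff]; tauto
        rw [hfil, Finset.card_sdiff_of_subset (hB_sub S hS _ hsM), hB_card S hS]
      rw [Finset.sum_congr rfl hterm, Finset.sum_const, hP, Finset.card_powersetCard]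
      rw [List.length_cons, Finset.prod_range_succ']
      simp only [List.getD_cons_succ, List.getD_cons_zero, List.take_succ_cons, List.sum_cons,
        List.take_zero, List.sum_nil, Nat.sub_zero, smul_eq_mul]
      rw [mul_comm]
      congr 1
      refine Finset.prod_congr rfl fun s _ => ?_
      congr 1
      omega

lemma bt_spec : ∀ (is Ms : List ℕ) (A : Finset ℕ) (L : List (Finset ℕ)),
    is.length = Ms.length →
    (∀ i ∈ is, 0 < i) → L ∈ blockTuples A is Ms →
    L.map Finset.card = is ∧ L.map (fun B => B.sup id) = Ms ∧
      L.Pairwise (fun B C => Disjoint B C) ∧ ∀ B ∈ L, B ⊆ A := by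
  intro is
  induction is with
  | nil =>
    intro Ms A L hlen _ hL
    simp only [blockTuples, Finset.mem_singleton] at hL
    subst hL
    simp at hlen ⊢
    exact List.eq_nil_of_length_eq_zero hlen.symm
  | cons i is ih =>
    intro Ms A L hlen hpos hL
    cases Ms with
    | nil => simp at hlen
    | cons M Ms =>
      simp only [blockTuples, Finset.mem_biUnion] at hL
      obtain ⟨S, hS, hLmem⟩ := hL
      by_cases hMA : M ∈ A
      · rw [if_pos hMA] at hLmem
        obtain ⟨L', hL', rfl⟩ := Finset.mem_image.1 hLmem
        obtain ⟨hcard, hsup, hdisj, hsub⟩ := ih Ms (A \ insert M S) L'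
          (by simpa using hlen) (fun j hj => hpos j (by simp [hj])) hL'
        obtain ⟨hSsub, hScard⟩ := Finset.mem_powersetCard.1 hS
        have hSlt : ∀ x ∈ S, x < M := fun x hx => (Finset.mem_filter.1 (hSsub hx)).2
        have hMS : M ∉ S := fun h => lt_irrefl M (hSlt M h)
        have hBA : insert M S ⊆ A := Finset.insert_subset hMA
          (hSsub.trans (Finset.filter_subset _ _))
        refine ⟨?_, ?_, ?_, ?_⟩
        · simp only [List.map_cons, hcard]
          rw [Finset.card_insert_of_notMem hMS, hScard]
          have := hpos i (by simp)
          congr 1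
          omega
        · simp only [List.map_cons, hsup, sup_id_insert hSlt]
        · refine List.Pairwise.cons ?_ hdisj
          intro C hC
          have := hsub C hC
          rw [Finset.disjoint_left]
          intro x hx hxC
          have := this hxC
          rw [Finset.mem_sdiff] at this
          exact this.2 hx
        · intro B hB
          rcases List.mem_cons.1 hB with rfl | hB
          · exact hBA
          · exact (hsub B hB).trans (Finset.sdiff_subset)
      · rw [if_neg hMA] at hLmem
        simp at hLmem

lemma mem_bt : ∀ (L : List (Finset ℕ)) (A : Finset ℕ),
    (∀ B ∈ L, B ⊆ A) → L.Pairwise (fun B C => Disjoint B C) → (∀ B ∈ L, B.Nonempty) →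
    L ∈ blockTuples A (L.map Finset.card) (L.map (fun B => B.sup id)) := by
  intro L
  induction L with
  | nil => intro A _ _ _; simp [blockTuples]
  | cons B L ih =>
    intro A hsub hdisj hne
    have hBne : B.Nonempty := hne B (by simp)
    have hMB : B.sup id ∈ B := sup_id_mem hBne
    have hMA : B.sup id ∈ A := hsub B (by simp) hMB
    simp only [List.map_cons, blockTuples, Finset.mem_biUnion]
    refine ⟨B.erase (B.sup id), ?_, ?_⟩
    · rw [Finset.mem_powersetCard]
      constructor
      · intro x hx
        rw [Finset.mem_erase] at hx
        rw [Finset.mem_filter]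
        exact ⟨hsub B (by simp) hx.2, lt_of_le_of_ne (le_sup_id hx.2) hx.1⟩
      · rw [Finset.card_erase_of_mem hMB]
    · rw [if_pos hMA, Finset.insert_erase hMB]
      refine Finset.mem_image.2 ⟨L, ?_, rfl⟩
      exact ih (A \ B) (fun C hC x hx => Finset.mem_sdiff.2 ⟨hsub C (by simp [hC]) hx,
          fun hxB => Finset.disjoint_left.1 ((List.pairwise_cons.1 hdisj).1 C hC) hxB hx⟩)
        (List.pairwise_cons.1 hdisj).2 (fun C hC => hne C (by simp [hC]))

def diffs (l : List ℕ) : List ℕ := l.zipWith (· - ·) (0 :: l)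

lemma diffs_length (l : List ℕ) : (diffs l).length = l.length := by
  show (l.zipWith (· - ·) (0 :: l)).length = l.length
  rw [List.length_zipWith]; simp

lemma diffs_getElem (l : List ℕ) (s : ℕ) (hs : s < (diffs l).length) :
    (diffs l)[s] = l[s]'(by rwa [diffs_length] at hs) - ((0 :: l)[s]'(by rw [diffs_length] at hs; simp; omega)) := by
  show (l.zipWith (· - ·) (0 :: l))[s]'(by simpa [_root_.diffs] using hs) = _
  rw [List.getElem_zipWith]

lemma sum_take_diffs (l : List ℕ) (hpw : l.Pairwise (· < ·)) :
    ∀ s (hs : s < l.length), ((diffs l).take (s+1)).sum = l[s]'hs := by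
  intro s
  induction s with
  | zero =>
    intro hs
    rw [List.sum_take_succ _ _ (by rwa [diffs_length]), List.take_zero, List.sum_nil,
      zero_add, diffs_getElem]
    simp
  | succ s ihs =>
    intro hs
    rw [List.sum_take_succ _ _ (by rwa [diffs_length]), ihs (by omega), diffs_getElem]
    have hmono := List.pairwise_iff_getElem.1 hpw s (s+1) (by omega) hs (by omega)
    simp only [List.getElem_cons_succ]
    omega

lemma psums_diffs (l : List ℕ) (hpw : l.Pairwise (· < ·)) : psums (diffs l) = l := by
  refine List.ext_getElem (by simp [psums_length, diffs_length]) fun s h1 h2 => ?_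
  have hs : s < l.length := h2
  rw [← List.getD_eq_getElem _ 0 h1, psums_getD _ _ (by rwa [diffs_length]),
    sum_take_diffs l hpw s hs]

lemma diffs_pos (l : List ℕ) (hpw : l.Pairwise (· < ·)) (h0 : ∀ x ∈ l, 0 < x) :
    ∀ d ∈ diffs l, 0 < d := by
  intro d hd
  obtain ⟨s, hs, rfl⟩ := List.mem_iff_getElem.1 hd
  rw [diffs_getElem]
  rcases s with _ | s
  · simpa using h0 _ (l.getElem_mem _)
  · have hmono := List.pairwise_iff_getElem.1 hpw s (s+1) (by rw [diffs_length] at hs; omega)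
      (by rwa [diffs_length] at hs) (by omega)
    simp only [List.getElem_cons_succ]
    omega

lemma diffs_sum (l : List ℕ) (hne : l ≠ []) (hpw : l.Pairwise (· < ·)) :
    (diffs l).sum = l[l.length - 1]'(by cases l <;> simp_all) := by
  have hlen : 0 < l.length := List.length_pos_iff.2 hne
  have := sum_take_diffs l hpw (l.length - 1) (by omega)
  rw [← this]
  rw [show l.length - 1 + 1 = l.length from by omega, ← diffs_length l, List.take_length]

/-- the total sum of the coefficients `c_{IJ}` over all pairs of
compositions of `n` of length `k` is the Stirling number of the second kind
`S(n,k)`, the number of set partitions of an `n`-set into `k` blocks. -/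
theorem stmt3 (n k : ℕ) (hn : 0 < n) (hk : 0 < k) (hkn : k ≤ n) :
    ∑ I ∈ Finset.univ.filter (fun I : Composition n => I.length = k),
      ∑ J ∈ Finset.univ.filter (fun J : Composition n => J.length = k),
        ∏ s ∈ Finset.range k,
          Nat.choose ((J.blocks.take (s+1)).sum - (I.blocks.take s).sum - 1)
            (I.blocks.getD s 0 - 1)
    = Nat.card {P : Finpartition (Finset.Icc 1 n) // P.parts.card = k} := by
  classical
  set A := Finset.Icc 1 n with hA
  set fI := Finset.univ.filter (fun I : Composition n => I.length = k) with hfI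
  have hAcard : A.card = n := by rw [hA, Nat.card_Icc]; omega
  -- facts about compositions in the filter
  have hlenI : ∀ I : Composition n, I ∈ fI → I.blocks.length = k := by
    intro I hI
    rw [Composition.blocks_length]
    exact (Finset.mem_filter.1 hI).2
  have hposI : ∀ I : Composition n, ∀ i ∈ I.blocks, 0 < i := fun I i hi => I.blocks_pos hi
  have hpsJ_pw : ∀ J : Composition n, (psums J.blocks).Pairwise (· < ·) :=
    fun J => psums_pairwise _ (hposI J)
  have hpsJ_len : ∀ J : Composition n, J ∈ fI → (psums J.blocks).length = k := by
    intro J hJ; rw [psums_length]; exact hlenI J hJ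
  have hpsJ_memA : ∀ J : Composition n, ∀ M ∈ psums J.blocks, M ∈ A := by
    intro J M hM
    rw [hA, Finset.mem_Icc]
    refine ⟨psums_pos _ (hposI J) M hM, ?_⟩
    have := psums_mem_le J.blocks M hM
    rwa [J.blocks_sum] at this
  -- Step 1: each summand equals a blockTuples cardinality
  have hcardEq : ∀ I ∈ fI, ∀ J ∈ fI,
      (blockTuples A I.blocks (psums J.blocks)).card
        = ∏ s ∈ Finset.range k,
            Nat.choose ((J.blocks.take (s+1)).sum - (I.blocks.take s).sum - 1)
              (I.blocks.getD s 0 - 1) := by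
    intro I hI J hJ
    rw [card_bt I.blocks (psums J.blocks) A (by rw [hlenI I hI, hpsJ_len J hJ])
      (hposI I) (hpsJ_pw J) (hpsJ_memA J), hlenI I hI]
    refine Finset.prod_congr rfl fun s hs => ?_
    have hsk : s < k := Finset.mem_range.1 hs
    have hsJ : s < J.blocks.length := by rw [hlenI J hJ]; exact hsk
    rw [psums_getD J.blocks s hsJ]
    set M := (J.blocks.take (s+1)).sum with hM
    have hMn : M ≤ n := by
      have := List.Sublist.sum_le_sum (List.take_sublist (s+1) J.blocks)
        (fun i hi => Nat.zero_le i)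
      rw [J.blocks_sum] at this
      exact this
    have hfil : A.filter (· < M) = Finset.Ico 1 M := by
      ext x
      rw [Finset.mem_filter, hA, Finset.mem_Icc, Finset.mem_Ico]
      constructor
      · rintro ⟨⟨h1, _⟩, h2⟩; exact ⟨h1, h2⟩
      · rintro ⟨h1, h2⟩; exact ⟨⟨h1, le_trans (le_of_lt h2) hMn⟩, h2⟩
    rw [hfil, Nat.card_Ico]
    congr 1
    omega
  -- Step 2: turn the double sum into the cardinality of a big biUnion
  rw [← Finset.sum_product' fI fI (fun I J =>
      ∏ s ∈ Finset.range k,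
        Nat.choose ((J.blocks.take (s+1)).sum - (I.blocks.take s).sum - 1)
          (I.blocks.getD s 0 - 1))]
  rw [show ∑ p ∈ fI ×ˢ fI, (∏ s ∈ Finset.range k,
        Nat.choose ((p.2.blocks.take (s+1)).sum - (p.1.blocks.take s).sum - 1)
          (p.1.blocks.getD s 0 - 1))
      = ∑ p ∈ fI ×ˢ fI, (blockTuples A p.1.blocks (psums p.2.blocks)).card from
    Finset.sum_congr rfl fun p hp => by
      have hp' := Finset.mem_product.1 hp
      exact (hcardEq p.1 hp'.1 p.2 hp'.2).symm]
  have hdisjU : ∀ p ∈ fI ×ˢ fI, ∀ q ∈ fI ×ˢ fI, p ≠ q →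
      Disjoint (blockTuples A p.1.blocks (psums p.2.blocks))
        (blockTuples A q.1.blocks (psums q.2.blocks)) := by
    intro p hp q hq hpq
    have hp' := Finset.mem_product.1 hp
    have hq' := Finset.mem_product.1 hq
    rw [Finset.disjoint_left]
    intro L hLp hLq
    obtain ⟨hc1, hs1, -, -⟩ := bt_spec p.1.blocks (psums p.2.blocks) A L
      (by rw [hlenI p.1 hp'.1, hpsJ_len p.2 hp'.2]) (hposI p.1) hLp
    obtain ⟨hc2, hs2, -, -⟩ := bt_spec q.1.blocks (psums q.2.blocks) A L
      (by rw [hlenI q.1 hq'.1, hpsJ_len q.2 hq'.2]) (hposI q.1) hLq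
    apply hpq
    have h1 : p.1 = q.1 := Composition.ext (hc1 ▸ hc2 ▸ rfl : p.1.blocks = q.1.blocks)
    have h2 : p.2 = q.2 := Composition.ext (psums_inj (hs1 ▸ hs2 ▸ rfl))
    exact Prod.ext h1 h2
  rw [← Finset.card_biUnion hdisjU]
  set bigF := (fI ×ˢ fI).biUnion (fun p => blockTuples A p.1.blocks (psums p.2.blocks))
    with hbigF
  -- Step 3: properties of members of bigF
  have hLspec : ∀ L ∈ bigF, ∃ I ∈ fI, ∃ J ∈ fI,
      L.map Finset.card = I.blocks ∧ L.map (fun B => B.sup id) = psums J.blocks ∧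
      L.Pairwise (fun B C => Disjoint B C) ∧ (∀ B ∈ L, B ⊆ A) := by
    intro L hL
    obtain ⟨p, hp, hLp⟩ := Finset.mem_biUnion.1 hL
    have hp' := Finset.mem_product.1 hp
    obtain ⟨hc, hs, hd, hsub⟩ := bt_spec p.1.blocks (psums p.2.blocks) A L
      (by rw [hlenI p.1 hp'.1, hpsJ_len p.2 hp'.2]) (hposI p.1) hLp
    exact ⟨p.1, hp'.1, p.2, hp'.2, hc, hs, hd, hsub⟩
  have hLne : ∀ L ∈ bigF, ∀ B ∈ L, B.Nonempty := by
    intro L hL B hB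
    obtain ⟨I, hI, J, hJ, hc, -, -, -⟩ := hLspec L hL
    rw [← Finset.card_pos]
    exact hposI I B.card (hc ▸ List.mem_map_of_mem (f := Finset.card) hB)
  have hLsub : ∀ L ∈ bigF, ∀ B ∈ L, B ⊆ A := by
    intro L hL
    obtain ⟨-, -, -, -, -, -, -, h⟩ := hLspec L hL
    exact h
  have hLsuplt : ∀ L ∈ bigF, L.Pairwise (fun B C => B.sup id < C.sup id) := by
    intro L hL
    obtain ⟨-, -, J, -, -, hs, -, -⟩ := hLspec L hL
    exact List.pairwise_map.1 (hs ▸ hpsJ_pw J)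
  have hLdisj : ∀ L ∈ bigF, L.Pairwise (fun B C => Disjoint B C) := by
    intro L hL
    obtain ⟨-, -, -, -, -, -, h, -⟩ := hLspec L hL
    exact h
  have hLnodup : ∀ L ∈ bigF, L.Nodup := by
    intro L hL
    exact (hLsuplt L hL).imp (fun h => by rintro rfl; exact lt_irrefl _ h)
  have hLlen : ∀ L ∈ bigF, L.length = k := by
    intro L hL
    obtain ⟨I, hI, -, -, hc, -, -, -⟩ := hLspec L hL
    have := congrArg List.length hc
    rw [List.length_map, hlenI I hI] at this
    exact this
  have hLsum : ∀ L ∈ bigF, (L.map Finset.card).sum = n := by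
    intro L hL
    obtain ⟨I, hI, -, -, hc, -, -, -⟩ := hLspec L hL
    rw [hc, I.blocks_sum]
  have hLpd : ∀ L ∈ bigF, ∀ B ∈ L.toFinset, ∀ C ∈ L.toFinset, B ≠ C → Disjoint B C := by
    intro L hL B hB C hC hBC
    haveI : Std.Symm (fun B C : Finset ℕ => Disjoint B C) := ⟨fun _ _ h => h.symm⟩
    exact (hLdisj L hL).forall (List.mem_toFinset.1 hB)
      (List.mem_toFinset.1 hC) hBC
  have hLsup_parts : ∀ L ∈ bigF, L.toFinset.sup id = A := by
    intro L hL
    apply Finset.eq_of_subset_of_card_le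
    · intro x hx
      rw [Finset.sup_eq_biUnion, Finset.mem_biUnion] at hx
      obtain ⟨B, hB, hxB⟩ := hx
      exact hLsub L hL B (List.mem_toFinset.1 hB) hxB
    · rw [Finset.sup_eq_biUnion]
      have hcb : (L.toFinset.biUnion id).card = ∑ B ∈ L.toFinset, B.card :=
        Finset.card_biUnion (hLpd L hL)
      rw [hcb, List.sum_toFinset _ (hLnodup L hL), hLsum L hL, hAcard]
  -- the map from lists to partitions
  let mk : (L : List (Finset ℕ)) → L ∈ bigF → Finpartition A := fun L hL =>
    { parts := L.toFinset
      supIndep := Finset.supIndep_iff_pairwiseDisjoint.2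
        (fun B hB C hC hBC => hLpd L hL B (by exact_mod_cast hB) C (by exact_mod_cast hC) hBC)
      sup_parts := hLsup_parts L hL
      bot_notMem := fun h => by
        obtain ⟨x, hx⟩ := hLne L hL ∅ (List.mem_toFinset.1 h)
        exact absurd hx (Finset.notMem_empty x) }
  have hmk_card : ∀ (L : List (Finset ℕ)) (hL : L ∈ bigF), (mk L hL).parts.card = k := by
    intro L hL
    show L.toFinset.card = k
    rw [List.toFinset_card_of_nodup (hLnodup L hL), hLlen L hL]
  rw [← Nat.card_eq_finsetCard bigF]
  apply Nat.card_eq_of_bijective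
    (fun L : {L // L ∈ bigF} => (⟨mk L.1 L.2, hmk_card L.1 L.2⟩ :
      {P : Finpartition A // P.parts.card = k}))
  constructor
  · -- injective
    rintro ⟨L₁, h₁⟩ ⟨L₂, h₂⟩ hEq
    have hparts : L₁.toFinset = L₂.toFinset := by
      have := congrArg (fun P : {P : Finpartition A // P.parts.card = k} => P.1.parts) hEq
      exact this
    apply Subtype.ext
    haveI : Std.Antisymm (fun B C : Finset ℕ => B.sup id < C.sup id) :=
      ⟨fun a b h1 h2 => absurd (lt_trans h1 h2) (lt_irrefl _)⟩
    exact List.Perm.eq_of_pairwise' (hLsuplt L₁ h₁) (hLsuplt L₂ h₂)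
      (List.perm_of_nodup_nodup_toFinset_eq (hLnodup L₁ h₁) (hLnodup L₂ h₂) hparts)
  · -- surjective
    rintro ⟨P, hPk⟩
    have hne : ∀ B ∈ P.parts, B.Nonempty := fun B hB => P.nonempty_of_mem_parts hB
    have hdisjP : ∀ B ∈ P.parts, ∀ C ∈ P.parts, B ≠ C → Disjoint B C :=
      fun B hB C hC h => P.disjoint hB hC h
    have hinj : Set.InjOn (fun B : Finset ℕ => B.sup id) P.parts := by
      intro B hB C hC hf
      by_contra hBC
      have hf' : B.sup id = C.sup id := hf
      have h2 : B.sup id ∈ C := by rw [hf']; exact sup_id_mem (hne C hC)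
      exact Finset.disjoint_left.1 (hdisjP B hB C hC hBC) (sup_id_mem (hne B hB)) h2
    set maxset := P.parts.image (fun B => B.sup id) with hmaxset
    set sortM := maxset.sort (· ≤ ·) with hsortM
    set partOf : ℕ → Finset ℕ :=
      fun m => (P.parts.filter (fun B => B.sup id = m)).sup id with hpartOfdef
    have hpartOf : ∀ B ∈ P.parts, partOf (B.sup id) = B := by
      intro B hB
      have hfilter : P.parts.filter (fun C => C.sup id = B.sup id) = {B} := by
        ext C
        rw [Finset.mem_filter, Finset.mem_singleton]
        constructor
        · rintro ⟨hC, hf⟩; exact hinj hC hB hf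
        · rintro rfl; exact ⟨hB, rfl⟩
      show (P.parts.filter (fun C => C.sup id = B.sup id)).sup id = B
      rw [hfilter, Finset.sup_singleton]
      rfl
    set L := sortM.map partOf with hL
    have hmemsort : ∀ m ∈ sortM, m ∈ maxset := fun m hm => (Finset.mem_sort _).1 hm
    have hLparts : ∀ B ∈ L, B ∈ P.parts := by
      intro B hB
      obtain ⟨m, hm, rfl⟩ := List.mem_map.1 hB
      obtain ⟨B₀, hB₀, rfl⟩ := Finset.mem_image.1 (hmemsort m hm)
      rw [hpartOf B₀ hB₀]
      exact hB₀
    have hLmapf : L.map (fun B => B.sup id) = sortM := by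
      rw [hL, List.map_map]
      conv_rhs => rw [← List.map_id sortM]
      refine List.map_congr_left fun m hm => ?_
      obtain ⟨B₀, hB₀, rfl⟩ := Finset.mem_image.1 (hmemsort m hm)
      show (partOf (B₀.sup id)).sup id = B₀.sup id
      rw [hpartOf B₀ hB₀]
    have hsorted : sortM.Pairwise (· < ·) := (Finset.sortedLT_sort maxset).pairwise
    have hLsuplt' : L.Pairwise (fun B C => B.sup id < C.sup id) :=
      List.pairwise_map.1 (hLmapf ▸ hsorted)
    have hnodupL : L.Nodup :=
      hLsuplt'.imp (fun h => by rintro rfl; exact lt_irrefl _ h)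
    have hLdisj' : L.Pairwise (fun B C => Disjoint B C) := by
      refine hLsuplt'.imp_of_mem (fun {B C} hB hC hlt => ?_)
      exact hdisjP B (hLparts B hB) C (hLparts C hC) (fun h => by rw [h] at hlt; exact lt_irrefl _ hlt)
    have hLsub' : ∀ B ∈ L, B ⊆ A := by
      intro B hB
      have : B ≤ P.parts.sup id := Finset.le_sup (f := id) (hLparts B hB)
      rwa [P.sup_parts] at this
    have hLne' : ∀ B ∈ L, B.Nonempty := fun B hB => hne B (hLparts B hB)
    have hLtoFin : L.toFinset = P.parts := by
      apply Finset.Subset.antisymm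
      · intro B hB
        exact hLparts B (List.mem_toFinset.1 hB)
      · intro B hB
        rw [List.mem_toFinset]
        have h1 : B.sup id ∈ maxset := Finset.mem_image_of_mem _ hB
        have h2 : B.sup id ∈ sortM := (Finset.mem_sort _).2 h1
        have := List.mem_map_of_mem (f := partOf) h2
        rwa [hpartOf B hB] at this
    have hLlen' : L.length = k := by
      rw [hL, List.length_map, hsortM, Finset.length_sort, hmaxset,
        Finset.card_image_of_injOn hinj, hPk]
    -- the compositions I and J
    have hIpos : ∀ i ∈ L.map Finset.card, 0 < i := by
      intro i hi
      obtain ⟨B, hB, rfl⟩ := List.mem_map.1 hi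
      exact Finset.card_pos.2 (hLne' B hB)
    have hIsum : (L.map Finset.card).sum = n := by
      rw [← List.sum_toFinset _ hnodupL, hLtoFin, Finpartition.sum_card_parts, hAcard]
    set l := L.map (fun B => B.sup id) with hldef
    have hlpw : l.Pairwise (· < ·) := hLmapf ▸ hsorted
    have hlpos : ∀ x ∈ l, 0 < x := by
      intro x hx
      obtain ⟨B, hB, rfl⟩ := List.mem_map.1 hx
      have hmem : B.sup id ∈ B := sup_id_mem (hLne' B hB)
      have := hLsub' B hB hmem
      rw [hA, Finset.mem_Icc] at this
      omega
    have hllen : l.length = k := by rw [hldef, List.length_map, hLlen']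
    have hlne : l ≠ [] := by
      intro h
      rw [h] at hllen
      simp at hllen
      omega
    have hlle : ∀ x ∈ l, x ≤ n := by
      intro x hx
      obtain ⟨B, hB, rfl⟩ := List.mem_map.1 hx
      have hmem : B.sup id ∈ B := sup_id_mem (hLne' B hB)
      have := hLsub' B hB hmem
      rw [hA, Finset.mem_Icc] at this
      omega
    have hnin : n ∈ l := by
      have hnA : n ∈ A := by rw [hA, Finset.mem_Icc]; omega
      have : n ∈ P.parts.sup id := by rw [P.sup_parts]; exact hnA
      rw [Finset.mem_sup] at this
      obtain ⟨B, hB, hnB⟩ := this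
      have hBL : B ∈ L := by rw [← List.mem_toFinset, hLtoFin]; exact hB
      have hfBn : B.sup id = n := le_antisymm
        (by
          have := hLsub' B hBL (sup_id_mem (hne B hB))
          rw [hA, Finset.mem_Icc] at this
          omega)
        (le_sup_id hnB)
      rw [← hfBn]
      exact List.mem_map_of_mem hBL
    have hlast : l[l.length - 1]'(by rw [hllen]; omega) = n := by
      obtain ⟨j, hj, hjn⟩ := List.mem_iff_getElem.1 hnin
      rcases Nat.lt_or_ge j (l.length - 1) with hlt | hge
      · exfalso
        have := List.pairwise_iff_getElem.1 hlpw j (l.length - 1) hj (by omega) hlt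
        rw [hjn] at this
        have hmem : l[l.length - 1]'(by omega) ∈ l := List.getElem_mem _
        have := hlle _ hmem
        omega
      · have : j = l.length - 1 := by omega
        subst this
        exact hjn
    have hJsum : (diffs l).sum = n := by rw [diffs_sum l hlne hlpw, hlast]
    have hmemL : L ∈ bigF := by
      rw [hbigF, Finset.mem_biUnion]
      refine ⟨((⟨L.map Finset.card, fun {i} hi => hIpos i hi, hIsum⟩ : Composition n),
        (⟨diffs l, fun {d} hd => diffs_pos l hlpw hlpos d hd, hJsum⟩ : Composition n)),
        Finset.mem_product.2 ⟨?_, ?_⟩, ?_⟩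
      · rw [hfI, Finset.mem_filter]
        refine ⟨Finset.mem_univ _, ?_⟩
        show (L.map Finset.card).length = k
        rw [List.length_map, hLlen']
      · rw [hfI, Finset.mem_filter]
        refine ⟨Finset.mem_univ _, ?_⟩
        show (diffs l).length = k
        rw [diffs_length, hllen]
      · show L ∈ blockTuples A (L.map Finset.card) (psums (diffs l))
        rw [psums_diffs l hlpw]
        exact mem_bt L A hLsub' hLdisj' hLne'
    refine ⟨⟨L, hmemL⟩, ?_⟩
    apply Subtype.ext
    apply Finpartition.ext
    exact hLtoFin
end

section
/- The number of set partitions of {1,...,n} into exactly k blocks whose sequence of block sizes, when blocks are ordered by increasing maximal elements, equals a fixed composition I = (i_1,...,i_k) of n, is ∏_{s=2}^{k} binomial(i_1+...+i_s - 1, i_1+...+i_{s-1}). -/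
open Finset

/-- The conditions for a tuple of blocks over ground set `A` with size list `L`. -/
def BSCond (A : Finset ℕ) (L : List ℕ) {k : ℕ} (B : Fin k → Finset ℕ) : Prop :=
  (∀ s t, s ≠ t → Disjoint (B s) (B t)) ∧
  Finset.univ.sup B = A ∧
  (∀ s t, s < t → (B s).max < (B t).max) ∧
  (∀ s, (B s).card = L.getD s.val 0)

/-- Tuples of blocks. -/
def BS (A : Finset ℕ) (L : List ℕ) (k : ℕ) : Type :=
  {B : Fin k → Finset ℕ // BSCond A L B}

instance BS.finite (A : Finset ℕ) (L : List ℕ) (k : ℕ) : Finite (BS A L k) := by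
  have hmem : ∀ (x : BS A L k) (s : Fin k), x.1 s ∈ A.powerset := by
    intro x s
    rw [Finset.mem_powerset]
    exact (Finset.le_sup (Finset.mem_univ s)).trans_eq x.2.2.1
  exact Finite.of_injective
    (fun x : BS A L k => fun s => (⟨x.1 s, hmem x s⟩ : {S // S ∈ A.powerset}))
    (by
      intro x y h
      apply Subtype.ext; funext s
      exact congrArg Subtype.val (congrFun h s))

lemma mycard_sigma {ι : Type*} [Fintype ι] (F : ι → Type*) [∀ i, Finite (F i)] :
    Nat.card (Σ i, F i) = ∑ i, Nat.card (F i) := by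
  have : ∀ i, Fintype (F i) := fun i => Fintype.ofFinite _
  simp [Nat.card_eq_fintype_card, Fintype.card_sigma]

/-- Generic equivalence between a subtype of a product and a sigma type. -/
def subtypeProdEquivSigma {α β : Type*} (Q : α → Prop) (R : α → β → Prop) :
    {p : α × β // Q p.1 ∧ R p.1 p.2} ≃ Σ a : {a // Q a}, {b : β // R a.1 b} where
  toFun p := ⟨⟨p.1.1, p.2.1⟩, ⟨p.1.2, p.2.2⟩⟩
  invFun x := ⟨(x.1.1, x.2.1), x.1.2, x.2.2⟩
  left_inv p := rfl
  right_inv x := rfl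

lemma getD_append_left (L₁ L₂ : List ℕ) {i : ℕ} (h : i < L₁.length) :
    (L₁ ++ L₂).getD i 0 = L₁.getD i 0 := by
  rw [List.getD_eq_getElem _ _ (by simp; omega), List.getD_eq_getElem _ _ h,
    List.getElem_append_left]

lemma getD_append_last (L₁ : List ℕ) (m : ℕ) : (L₁ ++ [m]).getD L₁.length 0 = m := by
  rw [List.getD_eq_getElem _ _ (by simp)]
  simp

lemma sup_univ_castSucc {k : ℕ} (B : Fin (k+1) → Finset ℕ) :
    Finset.univ.sup B = (Finset.univ.sup fun s : Fin k => B s.castSucc) ⊔ B (Fin.last k) := by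
  rw [Fin.univ_castSuccEmb, Finset.sup_cons, Finset.sup_map]
  exact sup_comm _ _

lemma max_erase_max'_lt (A : Finset ℕ) (h : A.Nonempty) :
    (A.erase (A.max' h)).max < (A.max' h : WithBot ℕ) := by
  rcases hm : (A.erase (A.max' h)).max with _ | b
  · exact WithBot.bot_lt_coe _
  · have hb := Finset.mem_of_max hm
    rw [Finset.mem_erase] at hb
    exact WithBot.coe_lt_coe.mpr (lt_of_le_of_ne (A.le_max' b hb.2) hb.1)

/-- The key step equivalence: tuples for `L' ++ [m]` over `A` correspond to the choice
of the complement `D` of the last block together with a tuple for `L'` over `D`. -/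
lemma step_equiv (A : Finset ℕ) (L' : List ℕ) (m : ℕ) (hm : 0 < m)
    (hsum : A.card = L'.sum + m) (hAne : A.Nonempty) :
    Nonempty (BS A (L' ++ [m]) (L'.length + 1) ≃
      {p : Finset ℕ × (Fin L'.length → Finset ℕ) //
        p.1 ∈ (A.erase (A.max' hAne)).powersetCard L'.sum ∧ BSCond p.1 L' p.2}) := by
  set M := A.max' hAne with hM
  have hMA : M ∈ A := A.max'_mem hAne
  -- facts about an element of the LHS
  have hsub : ∀ (B : BS A (L' ++ [m]) (L'.length + 1)) (s : Fin (L'.length + 1)),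
      B.1 s ⊆ A := by
    intro B s
    exact (Finset.le_sup (Finset.mem_univ s)).trans_eq B.2.2.1
  have hlast_card : ∀ B : BS A (L' ++ [m]) (L'.length + 1),
      (B.1 (Fin.last L'.length)).card = m := by
    intro B
    have := B.2.2.2.2 (Fin.last L'.length)
    simp only [Fin.val_last] at this
    rwa [getD_append_last] at this
  have hMlast : ∀ B : BS A (L' ++ [m]) (L'.length + 1), M ∈ B.1 (Fin.last L'.length) := by
    intro B
    obtain ⟨hdis, hsup, hmax, hsize⟩ := B.2
    have h1 : M ∈ Finset.univ.sup B.1 := hsup.symm ▸ hMA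
    rw [Finset.mem_sup] at h1
    obtain ⟨s, -, hs⟩ := h1
    rcases eq_or_ne s (Fin.last L'.length) with rfl | hne
    · exact hs
    · exfalso
      have hlt : s < Fin.last L'.length := lt_of_le_of_ne (Fin.le_last s) hne
      have h2 : (M : WithBot ℕ) ≤ (B.1 s).max := Finset.le_max hs
      have h3 : (B.1 (Fin.last L'.length)).max ≤ A.max := Finset.max_mono (hsub B _)
      have h4 : A.max = (M : WithBot ℕ) := (Finset.coe_max' hAne).symm
      exact absurd ((h2.trans_lt (hmax _ _ hlt)).trans_le (h3.trans_eq h4)) (lt_irrefl _)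
  refine ⟨{
    toFun := fun B => ⟨(A \ B.1 (Fin.last L'.length), fun s => B.1 s.castSucc), ?_, ?_⟩
    invFun := fun p => ⟨Fin.snoc p.1.2 (A \ p.1.1), ?_⟩
    left_inv := ?_
    right_inv := ?_ }⟩
  · -- membership of the complement in the powersetCard
    obtain ⟨hdis, hsup, hmax, hsize⟩ := B.2
    rw [Finset.mem_powersetCard]
    constructor
    · intro x hx
      rw [Finset.mem_sdiff] at hx
      rw [Finset.mem_erase]
      exact ⟨fun h => hx.2 (h ▸ hMlast B), hx.1⟩
    · rw [Finset.card_sdiff_of_subset (hsub B _), hlast_card B, hsum]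
      omega
  · -- BSCond for the initial part
    obtain ⟨hdis, hsup, hmax, hsize⟩ := B.2
    refine ⟨fun s t hst => hdis _ _ (by simpa [Fin.castSucc_inj] using hst), ?_,
      fun s t hst => hmax _ _ (Fin.castSucc_lt_castSucc_iff.mpr hst), fun s => ?_⟩
    · -- sup equals the complement of the last block
      show (Finset.univ.sup fun s : Fin L'.length => B.1 s.castSucc) =
        A \ B.1 (Fin.last L'.length)
      have hdecomp : (Finset.univ.sup fun s : Fin L'.length => B.1 s.castSucc) ⊔
          B.1 (Fin.last L'.length) = A := by
        rw [← sup_univ_castSucc, hsup]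
      have hdisjS : Disjoint (Finset.univ.sup fun s : Fin L'.length => B.1 s.castSucc)
          (B.1 (Fin.last L'.length)) := by
        rw [Finset.disjoint_sup_left]
        intro s _
        exact hdis _ _ (Fin.castSucc_lt_last s).ne
      calc (Finset.univ.sup fun s : Fin L'.length => B.1 s.castSucc)
          = ((Finset.univ.sup fun s : Fin L'.length => B.1 s.castSucc) ⊔
              B.1 (Fin.last L'.length)) \ B.1 (Fin.last L'.length) := by
            rw [Finset.sup_eq_union, Finset.union_sdiff_cancel_right hdisjS]
        _ = A \ B.1 (Fin.last L'.length) := by rw [hdecomp]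
    · have := hsize s.castSucc
      rwa [getD_append_left _ _ (by simpa using s.isLt)] at this
  · -- BSCond for the snoc tuple
    obtain ⟨hD, hdis', hsup', hmax', hsize'⟩ := p.2
    rw [Finset.mem_powersetCard] at hD
    obtain ⟨hDE, hDcard⟩ := hD
    have hDA : p.1.1 ⊆ A := hDE.trans (Finset.erase_subset _ _)
    have hMD : M ∉ p.1.1 := fun h => absurd (Finset.mem_erase.mp (hDE h)).1 (not_not.mpr rfl)
    have hsubD : ∀ s, p.1.2 s ⊆ p.1.1 := by
      intro s
      exact (Finset.le_sup (Finset.mem_univ s)).trans_eq hsup'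
    have hMAD : M ∈ A \ p.1.1 := Finset.mem_sdiff.mpr ⟨hMA, hMD⟩
    refine ⟨?_, ?_, ?_, ?_⟩
    · intro s t hst
      rcases Fin.eq_castSucc_or_eq_last s with ⟨s', rfl⟩ | rfl <;>
        rcases Fin.eq_castSucc_or_eq_last t with ⟨t', rfl⟩ | rfl
      · simp only [Fin.snoc_castSucc]
        exact hdis' _ _ (by simpa [Fin.castSucc_inj] using hst)
      · simp only [Fin.snoc_castSucc, Fin.snoc_last]
        exact Disjoint.mono_left (hsubD s') Finset.disjoint_sdiff
      · simp only [Fin.snoc_castSucc, Fin.snoc_last]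
        exact (Disjoint.mono_left (hsubD t') Finset.disjoint_sdiff).symm
      · exact absurd rfl hst
    · rw [sup_univ_castSucc]
      simp only [Fin.snoc_castSucc, Fin.snoc_last]
      rw [hsup', Finset.sup_eq_union, Finset.union_sdiff_of_subset hDA]
    · intro s t hst
      rcases Fin.eq_castSucc_or_eq_last t with ⟨t', rfl⟩ | rfl
      · rcases Fin.eq_castSucc_or_eq_last s with ⟨s', rfl⟩ | rfl
        · simp only [Fin.snoc_castSucc]
          exact hmax' _ _ (Fin.castSucc_lt_castSucc_iff.mp hst)
        · exact absurd hst (not_lt.mpr (Fin.castSucc_lt_last t').le)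
      · rcases Fin.eq_castSucc_or_eq_last s with ⟨s', rfl⟩ | rfl
        · simp only [Fin.snoc_castSucc, Fin.snoc_last]
          calc (p.1.2 s').max ≤ (A.erase M).max :=
                Finset.max_mono ((hsubD s').trans hDE)
            _ < (M : WithBot ℕ) := max_erase_max'_lt A hAne
            _ ≤ (A \ p.1.1).max := Finset.le_max hMAD
        · exact absurd hst (lt_irrefl _)
    · intro s
      rcases Fin.eq_castSucc_or_eq_last s with ⟨s', rfl⟩ | rfl
      · simp only [Fin.snoc_castSucc]
        rw [getD_append_left _ _ (by simpa using s'.isLt)]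
        exact hsize' s'
      · simp only [Fin.snoc_last]
        show (A \ p.1.1).card = (L' ++ [m]).getD L'.length 0
        rw [getD_append_last, Finset.card_sdiff_of_subset hDA, hDcard, hsum]
        omega
  · -- left inverse
    intro B
    apply Subtype.ext
    show Fin.snoc (fun s => B.1 s.castSucc) (A \ (A \ B.1 (Fin.last L'.length))) = B.1
    rw [Finset.sdiff_sdiff_eq_self (hsub B _)]
    exact Fin.snoc_init_self B.1
  · -- right inverse
    intro p
    apply Subtype.ext
    have hD := p.2.1
    rw [Finset.mem_powersetCard] at hD
    have hDA : p.1.1 ⊆ A := hD.1.trans (Finset.erase_subset _ _)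
    have h2 : (Fin.snoc p.1.2 (A \ p.1.1) : Fin (L'.length + 1) → Finset ℕ)
        (Fin.last L'.length) = A \ p.1.1 := Fin.snoc_last _ _
    rw [Prod.ext_iff]
    constructor
    · show A \ (Fin.snoc p.1.2 (A \ p.1.1) : Fin (L'.length + 1) → Finset ℕ)
        (Fin.last L'.length) = p.1.1
      rw [h2, Finset.sdiff_sdiff_eq_self hDA]
    · funext s
      show (Fin.snoc p.1.2 (A \ p.1.1) : Fin (L'.length + 1) → Finset ℕ) s.castSucc = p.1.2 s
      exact Fin.snoc_castSucc _ _ s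

lemma BS_card : ∀ (k : ℕ) (L : List ℕ), L.length = k → (∀ m ∈ L, 0 < m) →
    ∀ A : Finset ℕ, A.card = L.sum →
    Nat.card (BS A L k) =
      ∏ s ∈ Finset.Ico 1 k, Nat.choose ((L.take (s+1)).sum - 1) ((L.take s).sum) := by
  intro k
  induction k with
  | zero =>
    intro L hL _ A hA
    have hL0 : L = [] := List.length_eq_zero_iff.mp hL
    subst hL0
    have hA0 : A = ∅ := Finset.card_eq_zero.mp (by simpa using hA)
    subst hA0
    have hne : Nonempty (BS ∅ [] 0) := ⟨⟨fun s => s.elim0, by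
      refine ⟨fun s => s.elim0, ?_, fun s => s.elim0, fun s => s.elim0⟩
      simp⟩⟩
    have hsub : Subsingleton (BS ∅ [] 0) :=
      ⟨by intro a b; apply Subtype.ext; funext s; exact s.elim0⟩
    rw [Nat.card_eq_one_iff_unique.mpr ⟨hsub, hne⟩]
    simp
  | succ k' IH =>
    intro L hL hpos A hA
    have hLne : L ≠ [] := by intro h; subst h; simp at hL
    obtain ⟨L', m, rfl⟩ : ∃ L' m, L = L' ++ [m] :=
      ⟨L.dropLast, L.getLast hLne, (L.dropLast_append_getLast hLne).symm⟩
    have hL' : L'.length = k' := by simpa using hL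
    subst hL'
    have hm : 0 < m := hpos m (by simp)
    have hsum : A.card = L'.sum + m := by simpa using hA
    have hAne : A.Nonempty := by rw [← Finset.card_pos, hsum]; omega
    obtain ⟨e⟩ := step_equiv A L' m hm hsum hAne
    set M := A.max' hAne with hM
    set pc := (A.erase M).powersetCard L'.sum with hpc
    -- compute the cardinality of the LHS
    have hfib : ∀ D : {D // D ∈ pc},
        Nat.card {b : Fin L'.length → Finset ℕ // BSCond D.1 L' b} =
        ∏ s ∈ Finset.Ico 1 L'.length,
          Nat.choose ((L'.take (s+1)).sum - 1) ((L'.take s).sum) := by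
      intro D
      have hDmem : (D : Finset ℕ) ∈ (A.erase M).powersetCard L'.sum := D.2
      rw [Finset.mem_powersetCard] at hDmem
      exact IH L' rfl (fun x hx => hpos x (by simp [hx])) D.1 hDmem.2
    haveI : ∀ D : {D // D ∈ pc}, Finite {b : Fin L'.length → Finset ℕ // BSCond D.1 L' b} :=
      fun D => BS.finite D.1 L' L'.length
    have hcard : Nat.card (BS A (L' ++ [m]) (L'.length + 1)) =
        ((A.card - 1).choose L'.sum) *
          ∏ s ∈ Finset.Ico 1 L'.length,
            Nat.choose ((L'.take (s+1)).sum - 1) ((L'.take s).sum) := by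
      have e2 := e.trans (subtypeProdEquivSigma (fun D => D ∈ pc)
        (fun (D : Finset ℕ) (B : Fin L'.length → Finset ℕ) => BSCond D L' B))
      rw [Nat.card_congr e2, mycard_sigma]
      rw [Finset.sum_congr rfl (fun D _ => hfib D), Finset.sum_const, smul_eq_mul]
      congr 1
      rw [Finset.card_univ, Fintype.card_coe, hpc, Finset.card_powersetCard,
        Finset.card_erase_of_mem (A.max'_mem hAne)]
    rw [hcard]
    -- compute the RHS
    rcases Nat.eq_zero_or_pos L'.length with h0 | hpos'
    · have hL'0 : L' = [] := List.length_eq_zero_iff.mp h0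
      subst hL'0
      simp
    · rw [Finset.prod_Ico_succ_top hpos']
      have htop : ((L' ++ [m]).take (L'.length + 1)).sum - 1 = A.card - 1 := by
        rw [List.take_of_length_le (by simp), hA]
      have htop2 : ((L' ++ [m]).take L'.length).sum = L'.sum := by
        rw [List.take_left]
      rw [htop, htop2]
      rw [Finset.prod_congr rfl (fun s hs => ?_), mul_comm]
      rw [Finset.mem_Ico] at hs
      rw [List.take_append_of_le_length (by omega), List.take_append_of_le_length (by omega)]

/-- the number of set partitions of `{1,…,n}` into `k` blocks whose
sequence of block sizes, with blocks ordered by increasing maxima, is the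
composition `I`, equals `∏_{s=2}^{k} binom(i_1+⋯+i_s-1, i_1+⋯+i_{s-1})`. -/
theorem stmt4 (n k : ℕ) (I : Composition n) (hI : I.length = k) :
    Nat.card {P : Finpartition (Finset.Icc 1 n) //
      P.parts.card = k ∧
      ∃ B : Fin k → Finset ℕ,
        (∀ s, B s ∈ P.parts) ∧
        (∀ p ∈ P.parts, ∃ s, B s = p) ∧
        (∀ s t : Fin k, s < t → (B s).max < (B t).max) ∧
        (∀ s : Fin k, (B s).card = I.blocks.getD s.val 0)} =
    ∏ s ∈ Finset.Ico 1 k,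
      Nat.choose ((I.blocks.take (s+1)).sum - 1) ((I.blocks.take s).sum) := by
  subst hI
  have hlen : I.blocks.length = I.length := I.blocks_length
  -- the map from block tuples to partitions
  have hBinj : ∀ x : BS (Finset.Icc 1 n) I.blocks I.length, Function.Injective x.1 := by
    intro x s t h
    by_contra hne
    rcases (Ne.lt_or_gt hne) with hlt | hlt
    · have := x.2.2.2.1 _ _ hlt
      rw [h] at this
      exact lt_irrefl _ this
    · have := x.2.2.2.1 _ _ hlt
      rw [h] at this
      exact lt_irrefl _ this
  have hnebot : ∀ (x : BS (Finset.Icc 1 n) I.blocks I.length) (s : Fin I.length),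
      x.1 s ≠ ⊥ := by
    intro x s h
    have hcard := x.2.2.2.2 s
    rw [h] at hcard
    have hs : s.val < I.blocks.length := by omega
    rw [List.getD_eq_getElem _ _ hs] at hcard
    have := I.blocks_pos (I.blocks.getElem_mem hs)
    simp [Finset.bot_eq_empty] at hcard
    omega
  let φ : BS (Finset.Icc 1 n) I.blocks I.length →
      {P : Finpartition (Finset.Icc 1 n) //
        P.parts.card = I.length ∧
        ∃ B : Fin I.length → Finset ℕ,
          (∀ s, B s ∈ P.parts) ∧
          (∀ p ∈ P.parts, ∃ s, B s = p) ∧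
          (∀ s t : Fin I.length, s < t → (B s).max < (B t).max) ∧
          (∀ s : Fin I.length, (B s).card = I.blocks.getD s.val 0)} := fun x =>
    ⟨⟨Finset.image x.1 Finset.univ,
      Finset.supIndep_iff_pairwiseDisjoint.mpr (by
        intro a ha b hb hab
        rw [Finset.coe_image, Set.mem_image] at ha hb
        obtain ⟨s, -, rfl⟩ := ha
        obtain ⟨t, -, rfl⟩ := hb
        exact x.2.1 s t (fun h => hab (by rw [h]))),
      by rw [Finset.sup_image]; exact x.2.2.1,
      by
        intro h
        rw [Finset.mem_image] at h
        obtain ⟨s, -, hs⟩ := h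
        exact hnebot x s hs⟩,
      by
        show (Finset.image x.1 Finset.univ).card = I.length ∧ _
        refine ⟨by rw [Finset.card_image_of_injective _ (hBinj x)]; simp, x.1, ?_, ?_,
          x.2.2.2.1, x.2.2.2.2⟩
        · intro s
          exact Finset.mem_image_of_mem _ (Finset.mem_univ s)
        · intro p hp
          rw [Finset.mem_image] at hp
          obtain ⟨s, -, hs⟩ := hp
          exact ⟨s, hs⟩⟩
  have hφbij : Function.Bijective φ := by
    constructor
    · -- injective
      intro x y h
      have hparts : Finset.image x.1 Finset.univ = Finset.image y.1 Finset.univ :=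
        congrArg Finpartition.parts (congrArg Subtype.val h)
      have hmx : StrictMono (fun s => (x.1 s).max) := fun s t hst => x.2.2.2.1 s t hst
      have hmy : StrictMono (fun s => (y.1 s).max) := fun s t hst => y.2.2.2.1 s t hst
      have hrange : ∀ z : Fin I.length → Finset ℕ,
          Set.range (fun s => (z s).max) =
            {v | ∃ p ∈ Finset.image z Finset.univ, p.max = v} := by
        intro z
        ext v
        constructor
        · rintro ⟨s, rfl⟩
          exact ⟨z s, Finset.mem_image_of_mem _ (Finset.mem_univ s), rfl⟩
        · rintro ⟨p, hp, rfl⟩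
          rw [Finset.mem_image] at hp
          obtain ⟨s, -, rfl⟩ := hp
          exact ⟨s, rfl⟩
      have heq : (fun s => (x.1 s).max) = (fun s => (y.1 s).max) := by
        haveI : WellFoundedLT (Fin I.length) := inferInstance
        refine (hmx.range_inj hmy).mp ?_
        rw [hrange x.1, hrange y.1, hparts]
      apply Subtype.ext
      funext s
      have hmem : x.1 s ∈ Finset.image y.1 Finset.univ := by
        rw [← hparts]
        exact Finset.mem_image_of_mem _ (Finset.mem_univ s)
      rw [Finset.mem_image] at hmem
      obtain ⟨t, -, ht⟩ := hmem
      have : (y.1 t).max = (y.1 s).max := by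
        rw [ht, congrFun heq s]
      have hts : t = s := hmy.injective this
      rw [← ht, hts]
    · -- surjective
      rintro ⟨P, hcard, B, h1, h2, h3, h4⟩
      have hdis : ∀ s t, s ≠ t → Disjoint (B s) (B t) := by
        intro s t hst
        have hne : B s ≠ B t := by
          rcases hst.lt_or_gt with hlt | hlt
          · have := h3 _ _ hlt
            intro he
            rw [he] at this
            exact lt_irrefl _ this
          · have := h3 _ _ hlt
            intro he
            rw [he] at this
            exact lt_irrefl _ this
        exact P.disjoint (h1 s) (h1 t) hne
      have himg : Finset.image B Finset.univ = P.parts := by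
        apply Finset.Subset.antisymm
        · intro p hp
          rw [Finset.mem_image] at hp
          obtain ⟨s, -, rfl⟩ := hp
          exact h1 s
        · intro p hp
          obtain ⟨s, rfl⟩ := h2 p hp
          exact Finset.mem_image_of_mem _ (Finset.mem_univ s)
      have hsup : Finset.univ.sup B = Finset.Icc 1 n := by
        calc Finset.univ.sup B = Finset.univ.sup (id ∘ B) := rfl
          _ = (Finset.image B Finset.univ).sup id := (Finset.sup_image _ _ _).symm
          _ = P.parts.sup id := by rw [himg]
          _ = Finset.Icc 1 n := P.sup_parts
      refine ⟨⟨B, hdis, hsup, h3, h4⟩, ?_⟩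
      apply Subtype.ext
      show (⟨Finset.image B Finset.univ, _, _, _⟩ : Finpartition (Finset.Icc 1 n)) = P
      exact Finpartition.ext himg
  rw [Nat.card_congr (Equiv.ofBijective φ hφbij).symm]
  have hIccCard : (Finset.Icc 1 n).card = I.blocks.sum := by
    rw [Nat.card_Icc, I.blocks_sum]
    omega
  rw [BS_card I.length I.blocks hlen (fun m hm => I.blocks_pos hm) (Finset.Icc 1 n) hIccCard]
end

section
/- The noncommutative Bell polynomials B_n, defined in noncommuting variables Y_1, Y_2, ... by B_0 = 1 and B_{n+1} = Σ_{k=0}^{n} binomial(n,k) B_{n-k} Y_{k+1}, specialize under the substitution Y_k = ad_a^{k-1}(b) in K⟨a,b⟩ (field of characteristic zero) to B_n = Σ_{k=0}^{n} binomial(n,k) (-1)^k (a+b)^{n-k} a^k. -/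
open Finset

private lemma bell_step {A : Type*} [Ring A] (a b : A) (B : ℕ → A)
    (hB0 : B 0 = 1)
    (hBrec : ∀ n : ℕ, B (n + 1) =
      ∑ k ∈ Finset.range (n + 1),
        (n.choose k) • (B (n - k) * (fun x => a * x - x * a)^[k] b)) :
    ∀ n : ℕ, B (n + 1) = (a + b) * B n - B n * a := by
  intro n
  induction n using Nat.strong_induction_on with
  | _ n ih =>
    cases n with
    | zero =>
      rw [hBrec 0]
      simp [hB0]
    | succ m =>
      rw [hBrec (m + 1), Finset.sum_range_succ']
      simp only [Nat.succ_sub_succ_eq_sub, Nat.choose_succ_succ, add_smul,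
        Nat.choose_zero_right, one_smul, Nat.sub_zero, Function.iterate_zero_apply,
        Finset.sum_add_distrib]
      have h1 : ∑ k ∈ Finset.range (m + 1),
          (m.choose (k + 1)) • (B (m - k) * (fun x => a * x - x * a)^[k + 1] b)
          = (∑ j ∈ Finset.range (m + 1),
              (m.choose j) • (B (m + 1 - j) * (fun x => a * x - x * a)^[j] b))
            - B (m + 1) * b := by
        rw [Finset.sum_range_succ'
          (fun j => (m.choose j) • (B (m + 1 - j) * (fun x => a * x - x * a)^[j] b)) m]
        rw [Finset.sum_range_succ]
        simp [Nat.choose_succ_self, Nat.succ_sub_succ]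
      have h2 : ∑ j ∈ Finset.range (m + 1),
          (m.choose j) • (B (m + 1 - j) * (fun x => a * x - x * a)^[j] b)
          = ∑ j ∈ Finset.range (m + 1),
            (m.choose j) • (((a + b) * B (m - j) - B (m - j) * a) *
              (fun x => a * x - x * a)^[j] b) := by
        refine Finset.sum_congr rfl fun j hj => ?_
        have hj' : j ≤ m := Nat.lt_succ_iff.mp (Finset.mem_range.mp hj)
        have he : m + 1 - j = (m - j) + 1 := by omega
        rw [he, ih (m - j) (by omega)]
      rw [h1, h2]
      rw [add_assoc, sub_add_cancel]
      rw [hBrec m, Finset.mul_sum, Finset.sum_mul]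
      rw [← Finset.sum_sub_distrib, ← Finset.sum_add_distrib]
      refine Finset.sum_congr rfl fun k hk => ?_
      rw [Function.iterate_succ_apply']
      simp only [mul_smul_comm, smul_mul_assoc, ← smul_add, ← smul_sub]
      congr 1
      noncomm_ring

private lemma c_step {K A : Type*} [Field K] [Ring A] [Algebra K A] (a b : A) (n : ℕ) :
    (∑ k ∈ Finset.range (n + 1 + 1),
        (((n + 1).choose k : K) * (-1) ^ k) • ((a + b) ^ (n + 1 - k) * a ^ k)) =
      (a + b) * (∑ k ∈ Finset.range (n + 1),
        ((n.choose k : K) * (-1) ^ k) • ((a + b) ^ (n - k) * a ^ k)) -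
      (∑ k ∈ Finset.range (n + 1),
        ((n.choose k : K) * (-1) ^ k) • ((a + b) ^ (n - k) * a ^ k)) * a := by
  have hA : (a + b) * (∑ k ∈ Finset.range (n + 1),
        ((n.choose k : K) * (-1) ^ k) • ((a + b) ^ (n - k) * a ^ k))
      = ∑ k ∈ Finset.range (n + 1),
        ((n.choose k : K) * (-1) ^ k) • ((a + b) ^ (n - k + 1) * a ^ k) := by
    rw [Finset.mul_sum]
    refine Finset.sum_congr rfl fun k hk => ?_
    rw [mul_smul_comm, ← mul_assoc, ← pow_succ']
  have hD : (∑ k ∈ Finset.range (n + 1),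
        ((n.choose k : K) * (-1) ^ k) • ((a + b) ^ (n - k) * a ^ k)) * a
      = ∑ k ∈ Finset.range (n + 1),
        ((n.choose k : K) * (-1) ^ k) • ((a + b) ^ (n - k) * a ^ (k + 1)) := by
    rw [Finset.sum_mul]
    refine Finset.sum_congr rfl fun k hk => ?_
    rw [smul_mul_assoc, mul_assoc, ← pow_succ]
  rw [hA, hD, Finset.sum_range_succ']
  simp only [Nat.succ_sub_succ_eq_sub, Nat.choose_succ_succ, Nat.cast_add, add_mul, add_smul,
    Nat.choose_zero_right, Nat.cast_one, pow_zero, one_mul, mul_one, Nat.sub_zero,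
    Finset.sum_add_distrib]
  have hE : ∑ k ∈ Finset.range (n + 1),
        ((n.choose (k + 1) : K) * (-1) ^ (k + 1)) • ((a + b) ^ (n - k) * a ^ (k + 1))
      = (∑ k ∈ Finset.range (n + 1),
          ((n.choose k : K) * (-1) ^ k) • ((a + b) ^ (n - k + 1) * a ^ k))
        - (1 : K) • ((a + b) ^ (n + 1) * a ^ 0) := by
    rw [Finset.sum_range_succ'
      (fun k => ((n.choose k : K) * (-1) ^ k) • ((a + b) ^ (n - k + 1) * a ^ k)) n]
    rw [Finset.sum_range_succ]
    simp only [Nat.choose_succ_self, Nat.cast_zero, zero_mul, zero_smul, add_zero,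
      Nat.choose_zero_right, Nat.cast_one, one_mul, pow_zero, Nat.sub_zero, pow_zero,
      add_sub_cancel_right]
    refine Finset.sum_congr rfl fun k hk => ?_
    have : n - (k + 1) + 1 = n - k := by
      have := Finset.mem_range.mp hk; omega
    rw [this]
  simp only [pow_zero, mul_one] at hE
  simp only [Nat.succ_eq_add_one]
  rw [hE]
  have hX : ∑ x ∈ Finset.range (n + 1),
      ((n.choose x : K) * (-1) ^ (x + 1)) • ((a + b) ^ (n - x) * a ^ (x + 1))
      = - ∑ k ∈ Finset.range (n + 1),
        ((n.choose k : K) * (-1) ^ k) • ((a + b) ^ (n - k) * a ^ (k + 1)) := by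
    rw [← Finset.sum_neg_distrib]
    refine Finset.sum_congr rfl fun k hk => ?_
    rw [pow_succ (-1 : K), show ((n.choose k : K)) * ((-1) ^ k * -1)
      = -((n.choose k : K) * (-1) ^ k) by ring, neg_smul]
  rw [hX]
  simp only [one_smul]
  abel

/-- the noncommutative Bell polynomials `B_n`, specialized at
`Y_k = ad_a^{k-1}(b)`, are `B_n = Σ_{k=0}^n binom(n,k)(-1)^k (a+b)^{n-k}a^k`. -/
theorem stmt10 (K : Type*) [Field K] [CharZero K]
    (a b : FreeAlgebra K (Fin 2))
    (ha : a = FreeAlgebra.ι K (0 : Fin 2))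
    (hb : b = FreeAlgebra.ι K (1 : Fin 2))
    (B : ℕ → FreeAlgebra K (Fin 2))
    (hB0 : B 0 = 1)
    (hBrec : ∀ n : ℕ, B (n + 1) =
      ∑ k ∈ Finset.range (n + 1),
        (n.choose k) • (B (n - k) * (fun x => a * x - x * a)^[k] b)) :
    ∀ n : ℕ, B n =
      ∑ k ∈ Finset.range (n + 1),
        ((n.choose k : K) * (-1) ^ k) • ((a + b) ^ (n - k) * a ^ k) := by
  intro n
  induction n with
  | zero => simpa using hB0
  | succ m ihm =>
    rw [bell_step a b B hB0 hBrec m, ihm, c_step a b m]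
end

section
/- The quasi-shuffle product on words over the positive integers is associative: for all words u, v, w, (u ⧢⁺ v) ⧢⁺ w = u ⧢⁺ (v ⧢⁺ w), where the quasi-shuffle is defined recursively by au ⧢⁺ bv = a(u ⧢⁺ bv) + b(au ⧢⁺ v) + (a+b)(u ⧢⁺ v) and ε ⧢⁺ w = w ⧢⁺ ε = w. -/
/-- The quasi-shuffle (stuffle) product of two words over the positive
integers, with values in the free `ℤ`-module on words. -/
noncomputable def qsh : List ℕ+ → List ℕ+ → (List ℕ+ →₀ ℤ)
  | [], v => Finsupp.single v 1
  | u, [] => Finsupp.single u 1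
  | a :: u, b :: v =>
      (qsh u (b :: v)).mapDomain (a :: ·) +
      (qsh (a :: u) v).mapDomain (b :: ·) +
      (qsh u v).mapDomain ((a + b) :: ·)
  termination_by u v => u.length + v.length

namespace QshAux

lemma qsh_nil_left (v : List ℕ+) : qsh [] v = Finsupp.single v 1 := by
  cases v <;> rw [qsh]

lemma qsh_nil_right (u : List ℕ+) : qsh u [] = Finsupp.single u 1 := by
  cases u with
  | nil => rw [qsh]
  | cons a u => rw [qsh]; simp

/-- Prepend a letter, linearly. -/
noncomputable def MD (d : ℕ+) (f : List ℕ+ →₀ ℤ) : List ℕ+ →₀ ℤ :=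
  f.mapDomain (d :: ·)

lemma qsh_cons (a b : ℕ+) (u v : List ℕ+) :
    qsh (a :: u) (b :: v) =
      MD a (qsh u (b :: v)) + MD b (qsh (a :: u) v) + MD (a + b) (qsh u v) := by
  rw [qsh]; rfl

/-- Left extension: `f ⧢⁺ w`. -/
noncomputable def L (w : List ℕ+) (f : List ℕ+ →₀ ℤ) : List ℕ+ →₀ ℤ :=
  f.sum fun x t => t • qsh x w

/-- Right extension: `u ⧢⁺ g`. -/
noncomputable def R (u : List ℕ+) (g : List ℕ+ →₀ ℤ) : List ℕ+ →₀ ℤ :=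
  g.sum fun x t => t • qsh u x

lemma L_add (w : List ℕ+) (f g : List ℕ+ →₀ ℤ) : L w (f + g) = L w f + L w g :=
  Finsupp.sum_add_index' (fun _ => zero_smul _ _) (fun _ _ _ => add_smul _ _ _)

lemma R_add (u : List ℕ+) (f g : List ℕ+ →₀ ℤ) : R u (f + g) = R u f + R u g :=
  Finsupp.sum_add_index' (fun _ => zero_smul _ _) (fun _ _ _ => add_smul _ _ _)

lemma MD_add (d : ℕ+) (f g : List ℕ+ →₀ ℤ) : MD d (f + g) = MD d f + MD d g :=
  Finsupp.mapDomain_add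

lemma L_MD (w : List ℕ+) (d : ℕ+) (f : List ℕ+ →₀ ℤ) :
    L w (MD d f) = f.sum fun x t => t • qsh (d :: x) w :=
  Finsupp.sum_mapDomain_index (fun _ => zero_smul _ _) (fun _ _ _ => add_smul _ _ _)

lemma R_MD (u : List ℕ+) (d : ℕ+) (g : List ℕ+ →₀ ℤ) :
    R u (MD d g) = g.sum fun x t => t • qsh u (d :: x) :=
  Finsupp.sum_mapDomain_index (fun _ => zero_smul _ _) (fun _ _ _ => add_smul _ _ _)

lemma MD_sum (d : ℕ+) (f : List ℕ+ →₀ ℤ) (h : List ℕ+ → ℤ → (List ℕ+ →₀ ℤ)) :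
    MD d (f.sum h) = f.sum fun x t => MD d (h x t) :=
  map_finsuppSum (Finsupp.mapDomain.addMonoidHom (d :: ·)) f h

lemma MD_smul (d : ℕ+) (t : ℤ) (f : List ℕ+ →₀ ℤ) : MD d (t • f) = t • MD d f :=
  Finsupp.mapDomain_smul t f

/-- Key expansion on the left. -/
lemma K1 (c : ℕ+) (w : List ℕ+) (d : ℕ+) (f : List ℕ+ →₀ ℤ) :
    L (c :: w) (MD d f) =
      MD d (L (c :: w) f) + MD c (L w (MD d f)) + MD (d + c) (L w f) := by
  rw [L_MD, L_MD]
  have : (f.sum fun x t => t • qsh (d :: x) (c :: w)) =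
      f.sum fun x t =>
        (MD d (t • qsh x (c :: w)) + MD c (t • qsh (d :: x) w)) +
          MD (d + c) (t • qsh x w) := by
    refine Finsupp.sum_congr fun x _ => ?_
    rw [qsh_cons, MD_smul, MD_smul, MD_smul, smul_add, smul_add]
  rw [this, Finsupp.sum_add, Finsupp.sum_add, ← MD_sum, ← MD_sum, ← MD_sum]
  rfl

/-- Key expansion on the right. -/
lemma K2 (a : ℕ+) (u : List ℕ+) (d : ℕ+) (g : List ℕ+ →₀ ℤ) :
    R (a :: u) (MD d g) =
      MD a (R u (MD d g)) + MD d (R (a :: u) g) + MD (a + d) (R u g) := by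
  rw [R_MD, R_MD]
  have : (g.sum fun x t => t • qsh (a :: u) (d :: x)) =
      g.sum fun x t =>
        (MD a (t • qsh u (d :: x)) + MD d (t • qsh (a :: u) x)) +
          MD (a + d) (t • qsh u x) := by
    refine Finsupp.sum_congr fun x _ => ?_
    rw [qsh_cons, MD_smul, MD_smul, MD_smul, smul_add, smul_add]
  rw [this, Finsupp.sum_add, Finsupp.sum_add, ← MD_sum, ← MD_sum, ← MD_sum]
  rfl

lemma L_single_one (w v : List ℕ+) : L w (Finsupp.single v 1) = qsh v w := by
  rw [L, Finsupp.sum_single_index (zero_smul ℤ (qsh v w)), one_smul]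

lemma R_single_one (u v : List ℕ+) : R u (Finsupp.single v 1) = qsh u v := by
  rw [R, Finsupp.sum_single_index (zero_smul ℤ (qsh u v)), one_smul]

lemma L_nil (f : List ℕ+ →₀ ℤ) : L [] f = f := by
  rw [L]
  simp only [qsh_nil_right, Finsupp.smul_single, smul_eq_mul, mul_one]
  exact Finsupp.sum_single f

lemma R_nil (f : List ℕ+ →₀ ℤ) : R [] f = f := by
  rw [R]
  simp only [qsh_nil_left, Finsupp.smul_single, smul_eq_mul, mul_one]
  exact Finsupp.sum_single f

lemma main : ∀ (n : ℕ) (u v w : List ℕ+),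
    u.length + v.length + w.length ≤ n → L w (qsh u v) = R u (qsh v w) := by
  intro n
  induction n with
  | zero =>
    intro u v w h
    obtain ⟨hu, hv, hw⟩ : u = [] ∧ v = [] ∧ w = [] := by
      cases u <;> cases v <;> cases w <;> simp_all
    subst hu; subst hv; subst hw
    rw [qsh_nil_left, L_single_one, R_single_one]
  | succ n ih =>
    intro u v w h
    match u, v, w with
    | [], v, w =>
      rw [qsh_nil_left, L_single_one, R_nil]
    | u, [], w =>
      rw [qsh_nil_right, qsh_nil_left, L_single_one, R_single_one]
    | u, v, [] =>
      rw [qsh_nil_right, R_single_one, L_nil]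
    | a :: u, b :: v, c :: w =>
      simp only [List.length_cons] at h
      have h1 : u.length + (b :: v).length + (c :: w).length ≤ n := by
        simp only [List.length_cons]; omega
      have h2 : (a :: u).length + v.length + (c :: w).length ≤ n := by
        simp only [List.length_cons]; omega
      have h3 : (a :: u).length + (b :: v).length + w.length ≤ n := by
        simp only [List.length_cons]; omega
      have h4 : u.length + v.length + (c :: w).length ≤ n := by
        simp only [List.length_cons]; omega
      have h5 : u.length + (b :: v).length + w.length ≤ n := by
        simp only [List.length_cons]; omega
      have h6 : (a :: u).length + v.length + w.length ≤ n := by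
        simp only [List.length_cons]; omega
      have h7 : u.length + v.length + w.length ≤ n := by omega
      have e1 := ih u (b :: v) (c :: w) h1
      have e2 := ih (a :: u) v (c :: w) h2
      have e3 := ih (a :: u) (b :: v) w h3
      have e4 := ih u v (c :: w) h4
      have e5 := ih u (b :: v) w h5
      have e6 := ih (a :: u) v w h6
      have e7 := ih u v w h7
      calc L (c :: w) (qsh (a :: u) (b :: v))
          = L (c :: w) (MD a (qsh u (b :: v))) + L (c :: w) (MD b (qsh (a :: u) v)) +
              L (c :: w) (MD (a + b) (qsh u v)) := by
            rw [qsh_cons, L_add, L_add]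
        _ = (MD a (L (c :: w) (qsh u (b :: v))) + MD c (L w (MD a (qsh u (b :: v)))) +
              MD (a + c) (L w (qsh u (b :: v)))) +
            (MD b (L (c :: w) (qsh (a :: u) v)) + MD c (L w (MD b (qsh (a :: u) v))) +
              MD (b + c) (L w (qsh (a :: u) v))) +
            (MD (a + b) (L (c :: w) (qsh u v)) + MD c (L w (MD (a + b) (qsh u v))) +
              MD (a + b + c) (L w (qsh u v))) := by
            rw [K1, K1, K1]
        _ = MD a (L (c :: w) (qsh u (b :: v))) + MD b (L (c :: w) (qsh (a :: u) v)) +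
            MD c (L w (qsh (a :: u) (b :: v))) +
            MD (a + b) (L (c :: w) (qsh u v)) + MD (a + c) (L w (qsh u (b :: v))) +
            MD (b + c) (L w (qsh (a :: u) v)) + MD (a + b + c) (L w (qsh u v)) := by
            rw [qsh_cons a b u v, L_add, L_add, MD_add, MD_add]
            abel
        _ = MD a (R u (qsh (b :: v) (c :: w))) + MD b (R (a :: u) (qsh v (c :: w))) +
            MD c (R (a :: u) (qsh (b :: v) w)) +
            MD (a + b) (R u (qsh v (c :: w))) + MD (a + c) (R u (qsh (b :: v) w)) +
            MD (b + c) (R (a :: u) (qsh v w)) + MD (a + b + c) (R u (qsh v w)) := by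
            rw [e1, e2, e3, e4, e5, e6, e7]
        _ = (MD a (R u (MD b (qsh v (c :: w)))) + MD b (R (a :: u) (qsh v (c :: w))) +
              MD (a + b) (R u (qsh v (c :: w)))) +
            (MD a (R u (MD c (qsh (b :: v) w))) + MD c (R (a :: u) (qsh (b :: v) w)) +
              MD (a + c) (R u (qsh (b :: v) w))) +
            (MD a (R u (MD (b + c) (qsh v w))) + MD (b + c) (R (a :: u) (qsh v w)) +
              MD (a + (b + c)) (R u (qsh v w))) := by
            rw [qsh_cons b c v w, R_add, R_add, MD_add, MD_add]
            simp only [add_assoc]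
            abel
        _ = R (a :: u) (MD b (qsh v (c :: w))) + R (a :: u) (MD c (qsh (b :: v) w)) +
            R (a :: u) (MD (b + c) (qsh v w)) := by
            rw [K2, K2, K2]
        _ = R (a :: u) (qsh (b :: v) (c :: w)) := by
            rw [qsh_cons, R_add, R_add]

end QshAux

/-- the quasi-shuffle product, extended bilinearly, is
associative: `(u ⧢⁺ v) ⧢⁺ w = u ⧢⁺ (v ⧢⁺ w)`. -/
theorem stmt13 (u v w : List ℕ+) :
    (qsh u v).sum (fun x c => c • qsh x w) =
      (qsh v w).sum (fun x c => c • qsh u x) := by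
  exact QshAux.main (u.length + v.length + w.length) u v w le_rfl
end

section
/- The map I ↦ W_I sending a composition I = (i_1,...,i_r) to the binary word a^{i_1-1} b a^{i_2-1} b ··· a^{i_r-1} b is a bijection between compositions of n and binary words of length n over {a,b} ending in b. Under this bijection, I is anti-Lyndon (i.e., Lyndon for the reversed order on positive integers) if and only if W_I is a Lyndon word for the order a < b. -/
/-- The binary word `a^{i_1-1} b a^{i_2-1} b ⋯ a^{i_r-1} b` associated with a
composition `I = (i_1, …, i_r)`; `a` is `false`, `b` is `true`. -/
def Wword (I : List ℕ) : List Bool :=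
  (I.map fun i => List.replicate (i - 1) false ++ [true]).flatten

/-- A word is Lyndon for the strict order `r`: it is nonempty and strictly
smaller (for the lexicographic extension of `r`) than all of its proper
nonempty suffixes. -/
def IsLyndonRel {α : Type*} (r : α → α → Prop) (w : List α) : Prop :=
  w ≠ [] ∧ ∀ s : List α, s ≠ [] → s ≠ w → s <:+ w → List.Lex r w s

namespace Stmt14Aux

lemma Wword_nil : Wword [] = [] := rfl

lemma Wword_cons (i : ℕ) (I : List ℕ) :
    Wword (i :: I) = List.replicate (i - 1) false ++ [true] ++ Wword I := by
  simp [Wword]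

lemma Wword_append (A B : List ℕ) : Wword (A ++ B) = Wword A ++ Wword B := by
  simp [Wword]

lemma Wword_ne_nil {I : List ℕ} (h : I ≠ []) : Wword I ≠ [] := by
  obtain ⟨a, t, rfl⟩ := List.exists_cons_of_ne_nil h
  simp [Wword_cons]

lemma Wword_length {I : List ℕ} (h : ∀ i ∈ I, 0 < i) : (Wword I).length = I.sum := by
  induction I with
  | nil => rfl
  | cons a t ih =>
    rw [Wword_cons, List.sum_cons]
    have ha : 0 < a := h a (by simp)
    have := ih (fun i hi => h i (by simp [hi]))
    simp [this]
    omega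

lemma Wword_concat {I : List ℕ} (h : I ≠ []) : ∃ u, Wword I = u ++ [true] := by
  induction I with
  | nil => simp at h
  | cons a t ih =>
    rcases eq_or_ne t [] with rfl | ht
    · exact ⟨List.replicate (a - 1) false, by rw [Wword_cons, Wword_nil, List.append_nil]⟩
    · obtain ⟨u, hu⟩ := ih ht
      exact ⟨List.replicate (a - 1) false ++ [true] ++ u,
        by rw [Wword_cons, hu]; simp⟩

lemma Wword_getLast {I : List ℕ} (h : I ≠ []) : (Wword I).getLast? = some true := by
  obtain ⟨u, hu⟩ := Wword_concat h
  rw [hu, List.getLast?_concat]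

/-- Decoding a binary word ending in `true` back to a composition. -/
def decode : List Bool → List ℕ
  | [] => []
  | true :: w => 1 :: decode w
  | false :: w =>
    match decode w with
    | [] => [1]
    | a :: t => (a + 1) :: t

lemma decode_block (k : ℕ) (w : List Bool) :
    decode (List.replicate k false ++ [true] ++ w) = (k + 1) :: decode w := by
  induction k with
  | zero => simp [decode]
  | succ k ih =>
    rw [List.replicate_succ, List.cons_append, List.cons_append]
    rw [show decode (false :: (List.replicate k false ++ [true] ++ w)) =
      match decode (List.replicate k false ++ [true] ++ w) with
      | [] => [1]
      | a :: t => (a + 1) :: t from rfl, ih]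

lemma decode_Wword {I : List ℕ} (h : ∀ i ∈ I, 0 < i) : decode (Wword I) = I := by
  induction I with
  | nil => rfl
  | cons a t ih =>
    rw [Wword_cons, decode_block, ih (fun i hi => h i (by simp [hi]))]
    have : 0 < a := h a (by simp)
    congr 1
    omega

lemma decode_spec {w : List Bool} (hw : w.getLast? = some true) :
    Wword (decode w) = w ∧ ∀ a ∈ decode w, 0 < a := by
  induction w with
  | nil => simp at hw
  | cons x w ih =>
    rcases eq_or_ne w [] with rfl | hne
    · simp at hw
      subst hw
      refine ⟨?_, ?_⟩ <;> simp [decode, Wword]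
    · obtain ⟨b, w', rfl⟩ := List.exists_cons_of_ne_nil hne
      rw [List.getLast?_cons_cons] at hw
      obtain ⟨hW, hpos⟩ := ih hw
      cases x with
      | true =>
        refine ⟨?_, ?_⟩
        · rw [show decode (true :: b :: w') = 1 :: decode (b :: w') from rfl,
            Wword_cons, hW]
          simp
        · intro a ha
          rw [show decode (true :: b :: w') = 1 :: decode (b :: w') from rfl,
            List.mem_cons] at ha
          rcases ha with rfl | ha
          · omega
          · exact hpos _ ha
      | false =>
        have hdne : decode (b :: w') ≠ [] := by
          intro h0
          rw [h0] at hW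
          exact hne hW.symm
        obtain ⟨a, t, hat⟩ := List.exists_cons_of_ne_nil hdne
        have hda : decode (false :: b :: w') = (a + 1) :: t := by
          rw [show decode (false :: b :: w') =
            match decode (b :: w') with
            | [] => [1]
            | a :: t => (a + 1) :: t from rfl, hat]
        have hapos : 0 < a := hpos a (by simp [hat])
        refine ⟨?_, ?_⟩
        · rw [hda, Wword_cons]
          rw [hat, Wword_cons] at hW
          have : (a + 1 - 1) = a := by omega
          rw [this]
          have ha' : List.replicate a false = false :: List.replicate (a - 1) false := by
            conv_lhs => rw [show a = (a-1) + 1 by omega]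
            rw [List.replicate_succ]
          rw [ha', List.cons_append, List.cons_append, hW]
        · intro c hc
          rw [hda, List.mem_cons] at hc
          rcases hc with rfl | hc
          · omega
          · exact hpos _ (by rw [hat]; exact List.mem_cons_of_mem _ hc)

lemma lex_append_left {α : Type*} {r : α → α → Prop} (p : List α) {l l' : List α}
    (h : List.Lex r l l') : List.Lex r (p ++ l) (p ++ l') := by
  induction p with
  | nil => simpa using h
  | cons a p ih => exact List.Lex.cons ih

lemma lex_block {k m : ℕ} (h : k < m) (u v : List Bool) :
    List.Lex (· < ·) (List.replicate m false ++ [true] ++ u)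
      (List.replicate k false ++ [true] ++ v) := by
  induction k generalizing m with
  | zero =>
    obtain ⟨m', rfl⟩ : ∃ m', m = m' + 1 := ⟨m - 1, by omega⟩
    rw [List.replicate_succ]
    exact List.Lex.rel (by simp)
  | succ k ih =>
    obtain ⟨m', rfl⟩ : ∃ m', m = m' + 1 := ⟨m - 1, by omega⟩
    rw [List.replicate_succ, List.replicate_succ, List.cons_append, List.cons_append,
      List.cons_append, List.cons_append]
    exact List.Lex.cons (ih (by omega) )

lemma lex_Wword {I J : List ℕ} (hI : ∀ i ∈ I, 0 < i) (hJ : ∀ i ∈ J, 0 < i)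
    (h : List.Lex (fun x y : ℕ => y < x) I J) :
    List.Lex (· < ·) (Wword I) (Wword J) := by
  induction I generalizing J with
  | nil =>
    cases h with
    | nil =>
      rename_i b J'
      obtain ⟨x, l, hx⟩ := List.exists_cons_of_ne_nil (Wword_ne_nil (I := b :: J') (by simp))
      rw [Wword_nil, hx]
      exact List.Lex.nil
  | cons a I' ih =>
    cases h with
    | rel hr =>
      rename_i b J'
      rw [Wword_cons, Wword_cons]
      have ha : 0 < a := hI a (by simp)
      have hb : 0 < b := hJ b (by simp)
      exact lex_block (by omega) _ _
    | cons h' =>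
      rename_i J'
      rw [Wword_cons, Wword_cons]
      exact lex_append_left _ (ih (fun i hi => hI i (by simp [hi]))
        (fun i hi => hJ i (by simp [hi])) h')

lemma lex_trichotomy (I J : List ℕ) :
    List.Lex (fun x y : ℕ => y < x) I J ∨ I = J ∨ List.Lex (fun x y : ℕ => y < x) J I := by
  haveI : IsTrichotomous ℕ (fun x y : ℕ => y < x) :=
    ⟨fun a b => by rcases lt_trichotomy a b with h | h | h
                   · exact fun _ h2 => absurd h h2
                   · exact fun _ _ => h
                   · exact fun h1 _ => absurd h h1⟩
  exact trichotomous_of (List.Lex (fun x y : ℕ => y < x)) I J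

lemma lex_Wword_rev {I J : List ℕ} (hI : ∀ i ∈ I, 0 < i) (hJ : ∀ i ∈ J, 0 < i)
    (h : List.Lex (· < ·) (Wword I) (Wword J)) :
    List.Lex (fun x y : ℕ => y < x) I J := by
  haveI : IsAsymm Bool (· < ·) := ⟨fun a b h h' => lt_asymm h h'⟩
  rcases lex_trichotomy I J with h1 | rfl | h1
  · exact h1
  · exact absurd h (asymm_of (List.Lex (· < · : Bool → Bool → Prop)) h)
  · exact absurd (lex_Wword hJ hI h1) (fun h2 => asymm_of (List.Lex (· < · : Bool → Bool → Prop)) h h2)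

lemma suffix_block {m : ℕ} {t : List Bool} (ht : t ≠ [])
    (h : t <:+ List.replicate m false ++ [true]) :
    ∃ k ≤ m, t = List.replicate k false ++ [true] := by
  induction m with
  | zero =>
    simp only [List.replicate_zero, List.nil_append] at h
    rcases List.suffix_cons_iff.mp h with rfl | h
    · exact ⟨0, le_refl 0, rfl⟩
    · simp at h; exact absurd h ht
  | succ m ih =>
    rw [List.replicate_succ, List.cons_append] at h
    rcases List.suffix_cons_iff.mp h with rfl | h
    · exact ⟨m + 1, le_refl _, by rw [List.replicate_succ, List.cons_append]⟩
    · obtain ⟨k, hk, rfl⟩ := ih h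
      exact ⟨k, by omega, rfl⟩

lemma suffix_Wword {I : List ℕ} {s : List Bool} (hI : ∀ i ∈ I, 0 < i) (hs : s ≠ [])
    (h : s <:+ Wword I) :
    ∃ m i J', 0 < m ∧ m ≤ i ∧ (i :: J') <:+ I ∧ s = Wword (m :: J') := by
  induction I with
  | nil =>
    rw [Wword_nil, List.suffix_nil] at h
    exact absurd h hs
  | cons a I' ih =>
    rw [Wword_cons] at h
    obtain ⟨p, hp⟩ := h
    rcases List.append_eq_append_iff.mp hp with ⟨a', ha1, ha2⟩ | ⟨c, hc1, hc2⟩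
    · -- block a = p ++ a', s = a' ++ Wword I'
      rcases eq_or_ne a' [] with rfl | ha'
      · rw [List.nil_append] at ha2
        subst ha2
        obtain ⟨m, i, J', h1, h2, h3, h4⟩ := ih (fun i hi => hI i (by simp [hi]))
          List.suffix_rfl
        exact ⟨m, i, J', h1, h2, h3.trans (List.suffix_cons a I'), h4⟩
      · obtain ⟨k, hk, rfl⟩ := suffix_block ha' ⟨p, ha1.symm⟩
        have ha : 0 < a := hI a (by simp)
        refine ⟨k + 1, a, I', by omega, by omega, List.suffix_rfl, ?_⟩
        rw [Wword_cons, ha2]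
        simp
    · -- Wword I' = c ++ s
      obtain ⟨m, i, J', h1, h2, h3, h4⟩ := ih (fun i hi => hI i (by simp [hi])) ⟨c, hc2.symm⟩
      exact ⟨m, i, J', h1, h2, h3.trans (List.suffix_cons a I'), h4⟩

end Stmt14Aux

open Stmt14Aux in
/-- `I ↦ W_I` is a bijection from compositions of `n` onto
binary words of length `n` ending in `b = true`, and `I` is anti-Lyndon
(Lyndon for the reversed order on the integers) iff `W_I` is Lyndon. -/
theorem stmt14 (n : ℕ) (hn : 0 < n) :
    Set.BijOn Wword {I : List ℕ | (∀ i ∈ I, 0 < i) ∧ I.sum = n}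
      {w : List Bool | w.length = n ∧ w.getLast? = some true} ∧
    ∀ I : List ℕ, (∀ i ∈ I, 0 < i) → I.sum = n →
      (IsLyndonRel (fun x y : ℕ => y < x) I ↔
        IsLyndonRel (· < ·) (Wword I)) := by
  constructor
  · refine ⟨?_, ?_, ?_⟩
    · -- MapsTo
      rintro I ⟨hpos, hsum⟩
      have hne : I ≠ [] := by
        rintro rfl
        simp at hsum
        omega
      exact ⟨by rw [Wword_length hpos, hsum], Wword_getLast hne⟩
    · -- InjOn
      rintro I₁ ⟨h1, _⟩ I₂ ⟨h2, _⟩ heq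
      rw [← decode_Wword h1, ← decode_Wword h2, heq]
    · -- SurjOn
      rintro w ⟨hlen, hlast⟩
      obtain ⟨hW, hpos⟩ := decode_spec hlast
      refine ⟨decode w, ⟨hpos, ?_⟩, hW⟩
      rw [← Wword_length hpos, hW, hlen]
  · intro I hpos hsum
    constructor
    · rintro ⟨hne, hL⟩
      refine ⟨Wword_ne_nil hne, ?_⟩
      intro s hs hsne hsuf
      obtain ⟨m, i, J', hm, hmi, hsufI, rfl⟩ := suffix_Wword hpos hs hsuf
      have hJ'pos : ∀ j ∈ m :: J', 0 < j := by
        intro j hj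
        rw [List.mem_cons] at hj
        rcases hj with rfl | hj
        · exact hm
        · exact hpos j (hsufI.subset (List.mem_cons_of_mem _ hj))
      apply lex_Wword hpos hJ'pos
      obtain ⟨a, I₁, rfl⟩ := List.exists_cons_of_ne_nil hne
      by_cases hc : (i :: J') = a :: I₁
      · -- the suffix is the whole list
        obtain ⟨rfl, rfl⟩ : i = a ∧ J' = I₁ := by
          constructor <;> injection hc
        rcases lt_or_eq_of_le hmi with hlt | rfl
        · exact List.Lex.rel hlt
        · exact absurd rfl hsne
      · have hlex := hL (i :: J') (by simp) hc hsufI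
        rcases lt_or_eq_of_le hmi with hlt | rfl
        · cases hlex with
          | rel hr => exact List.Lex.rel (by omega)
          | cons h' => exact List.Lex.rel (by omega)
        · exact hlex
    · rintro ⟨hWne, hL⟩
      have hne : I ≠ [] := by rintro rfl; exact hWne rfl
      refine ⟨hne, ?_⟩
      intro s hs hsne hsuf
      obtain ⟨p, rfl⟩ := hsuf
      have hspos : ∀ i ∈ s, 0 < i := fun i hi => hpos i (by simp [hi])
      have hWsuf : Wword s <:+ Wword (p ++ s) := ⟨Wword p, (Wword_append p s).symm⟩
      have hWs_ne : Wword s ≠ Wword (p ++ s) := by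
        intro heq
        have := decode_Wword hspos
        rw [heq, decode_Wword hpos] at this
        exact hsne this.symm
      exact lex_Wword_rev hpos hspos
        (hL (Wword s) (Wword_ne_nil hs) hWs_ne hWsuf)
end
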